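/- arXiv:1605.02866 — 10 statements merged into one kernel-verified Lean document; each statement's English description precedes it below -/
import Mathlib

section
/- If G is a K_{1,3}-free graph and C is a proper coloring of G, then every connected component of the subgraph of G induced by the union of two color classes is either a path or a cycle. -/
open SimpleGraph

/-- The claw `K_{1,3}`. -/
def claw : SimpleGraph (Fin 1 ⊕ Fin 3) := completeBipartiteGraph (Fin 1) (Fin 3)

/-- The graph `(K_2 ∪ K_1) + K_2`: vertices `3,4` are adjacent to everything,
`0,1` are adjacent, and `2` is adjacent only to `3,4`. -/
def kkJoin : SimpleGraph (Fin 5) := SimpleGraph.fromEdgeSet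
  {s(0,1), s(3,4), s(0,3), s(0,4), s(1,3), s(1,4), s(2,3), s(2,4)}

/-- `G` has no induced subgraph isomorphic to `H`. -/
def Free {W V : Type*} (H : SimpleGraph W) (G : SimpleGraph V) : Prop := IsEmpty (H ↪g G)

noncomputable def maxDeg {V : Type*} [Fintype V] (G : SimpleGraph V) : ℕ := by
  classical exact G.maxDegree

noncomputable def deg {V : Type*} [Fintype V] (G : SimpleGraph V) (v : V) : ℕ := by
  classical exact G.degree v

/-- A graph is a path graph. -/
def IsPathGraph {V : Type*} (G : SimpleGraph V) : Prop := ∃ n, Nonempty (G ≃g pathGraph n)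

/-- A graph is a cycle graph. -/
def IsCycleGraph {V : Type*} (G : SimpleGraph V) : Prop :=
  ∃ n, 3 ≤ n ∧ Nonempty (G ≃g cycleGraph n)

section Aux
set_option linter.unusedSectionVars false
open List
variable {W : Type*} [Fintype W] [DecidableEq W]

lemma extend_head (H : SimpleGraph W) : ∀ (k : ℕ) (l : List W),
    Fintype.card W - l.length ≤ k → l.Chain' H.Adj → l.Nodup →
    ∃ m : List W, l <:+ m ∧ m.Chain' H.Adj ∧ m.Nodup ∧
      (∀ x ∈ m.head?, ∀ y, H.Adj x y → y ∈ m) := by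
  intro k
  induction k with
  | zero =>
    intro l hk hc hn
    refine ⟨l, suffix_refl l, hc, hn, ?_⟩
    intro x hx y hadj
    by_contra hyl
    have : (y :: l).Nodup := List.nodup_cons.mpr ⟨hyl, hn⟩
    have := this.length_le_card
    simp at this
    omega
  | succ k ih =>
    intro l hk hc hn
    by_cases hex : ∃ y, (∀ x ∈ l.head?, H.Adj x y) ∧ y ∉ l ∧ l ≠ []
    · obtain ⟨y, hadj, hyl, hne⟩ := hex
      have hc' : (y :: l).Chain' H.Adj := List.isChain_cons.mpr ⟨fun x hx => (hadj x hx).symm, hc⟩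
      have hn' : (y :: l).Nodup := List.nodup_cons.mpr ⟨hyl, hn⟩
      have hk' : Fintype.card W - (y :: l).length ≤ k := by
        simp only [List.length_cons]; omega
      obtain ⟨m, hsuf, h1, h2, h3⟩ := ih (y :: l) hk' hc' hn'
      exact ⟨m, (List.suffix_cons y l).trans hsuf, h1, h2, h3⟩
    · push_neg at hex
      refine ⟨l, suffix_refl l, hc, hn, ?_⟩
      intro x hx y hadj
      by_contra hyl
      have hne : l ≠ [] := by rintro rfl; simp at hx
      have hh : l.head? = some (l.head hne) := List.head?_eq_head hne
      rw [hh] at hx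
      have := hex y ?_ 
      · tauto
      · intro x' hx'; rw [hh] at hx'; simp at hx hx'; subst hx hx'; exact hadj

lemma exists_maximal_list (H : SimpleGraph W) (v : W) :
    ∃ m : List W, v ∈ m ∧ m.Chain' H.Adj ∧ m.Nodup ∧
      (∀ x ∈ m.head?, ∀ y, H.Adj x y → y ∈ m) ∧
      (∀ x ∈ m.getLast?, ∀ y, H.Adj x y → y ∈ m) := by
  obtain ⟨m₁, hsuf1, hc1, hn1, hmax1⟩ :=
    extend_head H (Fintype.card W) [v] (by omega) (List.isChain_singleton v) (by simp)
  have hm₁ : m₁ ≠ [] := by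
    intro h; subst h; simpa using hsuf1.length_le
  have hc1' : m₁.reverse.Chain' H.Adj :=
    List.isChain_reverse.mpr (hc1.imp fun a b h => h.symm)
  obtain ⟨m₂, hsuf2, hc2, hn2, hmax2⟩ :=
    extend_head H (Fintype.card W) m₁.reverse (by omega) hc1' (List.nodup_reverse.mpr hn1)
  have hsub : ∀ x ∈ m₁, x ∈ m₂ := fun x hx =>
    hsuf2.subset (List.mem_reverse.mpr hx)
  have hlast : m₂.getLast? = m₁.head? := by
    obtain ⟨t, rfl⟩ := hsuf2
    rw [List.getLast?_append_of_ne_nil t (by simpa using hm₁),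
      List.getLast?_reverse]
  refine ⟨m₂, hsub v (hsuf1.subset (by simp)), hc2, hn2, hmax2, ?_⟩
  intro x hx y hadj
  rw [hlast] at hx
  exact hsub y (hmax1 x hx y hadj)

lemma frontier' {H : SimpleGraph W} {l : List W} {u w : W} (p : H.Walk u w)
    (hu : u ∈ l) (hw : w ∉ l) : ∃ x y, x ∈ l ∧ y ∉ l ∧ H.Adj x y := by
  induction p with
  | nil => exact absurd hu hw
  | @cons a b c h q ih =>
    by_cases hb : b ∈ l
    · exact ih hb hw
    · exact ⟨a, b, hu, hb, h⟩

lemma interior_two_nbrs {H : SimpleGraph W} {l : List W} (hc : l.Chain' H.Adj) (hn : l.Nodup)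
    {x : W} (hx : x ∈ l) (hhead : ¬ x ∈ l.head?) (hlast : ¬ x ∈ l.getLast?) :
    ∃ p q, p ≠ q ∧ p ∈ l ∧ q ∈ l ∧ H.Adj x p ∧ H.Adj x q := by
  obtain ⟨s, t, rfl⟩ := List.append_of_mem hx
  have hs : s ≠ [] := by
    rintro rfl; simp at hhead
  have ht : t ≠ [] := by
    rintro rfl
    rw [List.getLast?_concat] at hlast
    simp at hlast
  obtain ⟨h1, h2, h3⟩ := List.isChain_append.mp hc
  have hadj1 : H.Adj (s.getLast hs) x := by
    apply h3 _ (List.getLast?_eq_getLast hs) x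
    simp
  have hadj2 : H.Adj x (t.head ht) := by
    apply (List.isChain_cons.mp h2).1
    exact List.head?_eq_head ht
  obtain ⟨-, -, hdisj⟩ := List.nodup_append'.mp hn
  refine ⟨s.getLast hs, t.head ht, ?_, by simp [List.getLast_mem],
    by simp [List.head_mem], hadj1.symm, hadj2⟩
  intro h
  exact hdisj (List.getLast_mem hs) (by rw [h]; simp [List.head_mem])

lemma cover (H : SimpleGraph W) (hconn : H.Preconnected)
    (hdeg : ∀ v x y z, H.Adj v x → H.Adj v y → H.Adj v z → x = y ∨ x = z ∨ y = z)
    {l : List W} (hne : l ≠ []) (hc : l.Chain' H.Adj) (hn : l.Nodup)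
    (hmaxh : ∀ x ∈ l.head?, ∀ y, H.Adj x y → y ∈ l)
    (hmaxl : ∀ x ∈ l.getLast?, ∀ y, H.Adj x y → y ∈ l) : ∀ w, w ∈ l := by
  intro w
  by_contra hw
  obtain ⟨p⟩ := hconn (l.head hne) w
  obtain ⟨x, y, hx, hy, hadj⟩ := frontier' p (List.head_mem hne) hw
  by_cases hh : x ∈ l.head?
  · exact hy (hmaxh x hh y hadj)
  by_cases hl : x ∈ l.getLast?
  · exact hy (hmaxl x hl y hadj)
  obtain ⟨p, q, hpq, hp, hq, h1, h2⟩ := interior_two_nbrs hc hn hx hh hl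
  rcases hdeg x p q y h1 h2 hadj with h | h | h
  · exact hpq h
  · exact hy (h ▸ hp)
  · exact hy (h ▸ hq)

open SimpleGraph in
lemma mod_helper (n a b : ℕ) (hn : 2 ≤ n) (ha : a < n) (hb : b < n) :
    (a + (n - b)) % n = 1 ↔ (b + 1 = a ∨ (a = 0 ∧ b = n - 1)) := by
  rcases lt_or_ge a b with h | h
  · rw [Nat.mod_eq_of_lt (by omega)]; omega
  · rw [show a + (n - b) = (a - b) + n by omega, Nat.add_mod_right,
      Nat.mod_eq_of_lt (by omega)]
    omega

lemma cycleGraph_adj_iff {n : ℕ} (hn : 3 ≤ n) (i j : Fin n) :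
    (cycleGraph n).Adj i j ↔ ((i.val + 1 = j.val ∨ j.val + 1 = i.val) ∨
      ((i.val = 0 ∧ j.val = n - 1) ∨ (j.val = 0 ∧ i.val = n - 1))) := by
  rw [cycleGraph_adj', Fin.sub_def, Fin.sub_def]
  simp only [Fin.val_mk]
  rw [show n - j.val + i.val = i.val + (n - j.val) by omega,
    show n - i.val + j.val = j.val + (n - i.val) by omega,
    mod_helper n i.val j.val (by omega) i.isLt j.isLt,
    mod_helper n j.val i.val (by omega) j.isLt i.isLt]
  omega

lemma no_chord {H : SimpleGraph W}
    (hdeg : ∀ v x y z, H.Adj v x → H.Adj v y → H.Adj v z → x = y ∨ x = z ∨ y = z)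
    {l : List W} (hc : l.Chain' H.Adj) (hn : l.Nodup)
    {i j : ℕ} (hj : j < l.length) (hij : i + 1 < j)
    (hadj : H.Adj (l.get ⟨i, by omega⟩) (l.get ⟨j, hj⟩)) :
    i = 0 ∧ j = l.length - 1 := by
  have hstep : ∀ (i : ℕ) (h : i < l.length - 1), H.Adj (l.get ⟨i, by omega⟩) (l.get ⟨i+1, by omega⟩) :=
    fun i h => List.isChain_iff_getElem.mp hc i (by omega)
  have inj := fun {a b : Fin l.length} => hn.get_inj_iff (i := a) (j := b)
  constructor
  · by_contra hi0
    have h1 := hstep (i-1) (by omega)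
    have e1 : (⟨i-1+1, by omega⟩ : Fin l.length) = ⟨i, by omega⟩ := Fin.ext (by simp only [Fin.val_mk]; omega)
    rw [e1] at h1
    have h2 := hstep i (by omega)
    rcases hdeg (l.get ⟨i, by omega⟩) _ _ _ h1.symm h2 hadj with h | h | h
    · have := inj.mp h; simp only [Fin.mk.injEq] at this; omega
    · have := inj.mp h; simp only [Fin.mk.injEq] at this; omega
    · have := inj.mp h; simp only [Fin.mk.injEq] at this; omega
  · by_contra hj0
    have h1 := hstep (j-1) (by omega)
    have e1 : (⟨j-1+1, by omega⟩ : Fin l.length) = ⟨j, by omega⟩ := Fin.ext (by simp only [Fin.val_mk]; omega)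
    rw [e1] at h1
    have h2 := hstep j (by omega)
    rcases hdeg (l.get ⟨j, hj⟩) _ _ _ h1.symm h2 hadj.symm with h | h | h
    · have := inj.mp h; simp only [Fin.mk.injEq] at this; omega
    · have := inj.mp h; simp only [Fin.mk.injEq] at this; omega
    · have := inj.mp h; simp only [Fin.mk.injEq] at this; omega


theorem path_or_cycle (H : SimpleGraph W) (hconn : H.Connected)
    (hdeg : ∀ v x y z, H.Adj v x → H.Adj v y → H.Adj v z → x = y ∨ x = z ∨ y = z) :
    IsPathGraph H ∨ IsCycleGraph H := by
  obtain ⟨v⟩ := hconn.nonempty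
  obtain ⟨m, hv, hc, hn, hmaxh, hmaxl⟩ := exists_maximal_list H v
  have hne : m ≠ [] := List.ne_nil_of_mem hv
  have hcov := cover H hconn.preconnected hdeg hne hc hn hmaxh hmaxl
  have hlen : 0 < m.length := List.length_pos_iff.mpr hne
  have hstep : ∀ (i : ℕ) (h : i < m.length - 1), H.Adj (m.get ⟨i, by omega⟩) (m.get ⟨i+1, by omega⟩) :=
    fun i h => List.isChain_iff_getElem.mp hc i (by omega)
  have inj := fun {a b : Fin m.length} => hn.get_inj_iff (i := a) (j := b)
  set n := m.length with hnlen
  let e : Fin m.length ≃ W := hn.getEquivOfForallMemList m hcov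
  by_cases hcyc : 3 ≤ n ∧ H.Adj (m.get ⟨0, hlen⟩) (m.get ⟨n - 1, by omega⟩)
  · right
    refine ⟨n, hcyc.1, ⟨?_⟩⟩
    refine RelIso.symm ⟨e, ?_⟩
    intro i j
    show H.Adj (m.get i) (m.get j) ↔ (cycleGraph n).Adj i j
    rw [cycleGraph_adj_iff hcyc.1]
    constructor
    · intro hadj
      rcases Nat.lt_trichotomy i.val j.val with h | h | h
      · rcases Nat.lt_or_ge (i.val + 1) j.val with h2 | h2
        · obtain ⟨h3, h4⟩ := no_chord hdeg hc hn j.isLt h2 hadj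
          exact Or.inr (Or.inl ⟨h3, h4⟩)
        · exact Or.inl (Or.inl (by omega))
      · exact absurd (inj.mpr (Fin.ext h)) fun hh => H.irrefl (hh ▸ hadj)
      · rcases Nat.lt_or_ge (j.val + 1) i.val with h2 | h2
        · obtain ⟨h3, h4⟩ := no_chord hdeg hc hn i.isLt h2 hadj.symm
          exact Or.inr (Or.inr ⟨h3, h4⟩)
        · exact Or.inl (Or.inr (by omega))
    · rintro ((h | h) | (⟨h1, h2⟩ | ⟨h1, h2⟩))
      · have := hstep i.val (by omega)
        have e1 : (⟨i.val + 1, by omega⟩ : Fin m.length) = j := Fin.ext (by simp only [Fin.val_mk]; omega)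
        rwa [e1] at this
      · have := hstep j.val (by omega)
        have e1 : (⟨j.val + 1, by omega⟩ : Fin m.length) = i := Fin.ext (by simp only [Fin.val_mk]; omega)
        rw [e1] at this
        exact this.symm
      · have e1 : (⟨0, hlen⟩ : Fin m.length) = i := Fin.ext (by simp only [Fin.val_mk]; omega)
        have e2 : (⟨n - 1, by omega⟩ : Fin m.length) = j := Fin.ext (by simp only [Fin.val_mk]; omega)
        rw [e1, e2] at hcyc
        exact hcyc.2
      · have e1 : (⟨0, hlen⟩ : Fin m.length) = j := Fin.ext (by simp only [Fin.val_mk]; omega)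
        have e2 : (⟨n - 1, by omega⟩ : Fin m.length) = i := Fin.ext (by simp only [Fin.val_mk]; omega)
        rw [e1, e2] at hcyc
        exact hcyc.2.symm
  · left
    refine ⟨n, ⟨?_⟩⟩
    refine RelIso.symm ⟨e, ?_⟩
    intro i j
    show H.Adj (m.get i) (m.get j) ↔ (pathGraph n).Adj i j
    rw [pathGraph_adj]
    constructor
    · intro hadj
      rcases Nat.lt_trichotomy i.val j.val with h | h | h
      · rcases Nat.lt_or_ge (i.val + 1) j.val with h2 | h2
        · obtain ⟨h3, h4⟩ := no_chord hdeg hc hn j.isLt h2 hadj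
          exfalso
          apply hcyc
          have e1 : (⟨0, hlen⟩ : Fin m.length) = i := Fin.ext (by simp only [Fin.val_mk]; omega)
          have e2 : (⟨n - 1, by omega⟩ : Fin m.length) = j := Fin.ext (by simp only [Fin.val_mk]; omega)
          refine ⟨by omega, ?_⟩
          rw [e1, e2]
          exact hadj
        · exact Or.inl (by omega)
      · exact absurd (inj.mpr (Fin.ext h)) fun hh => H.irrefl (hh ▸ hadj)
      · rcases Nat.lt_or_ge (j.val + 1) i.val with h2 | h2
        · obtain ⟨h3, h4⟩ := no_chord hdeg hc hn i.isLt h2 hadj.symm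
          exfalso
          apply hcyc
          have e1 : (⟨0, hlen⟩ : Fin m.length) = j := Fin.ext (by simp only [Fin.val_mk]; omega)
          have e2 : (⟨n - 1, by omega⟩ : Fin m.length) = i := Fin.ext (by simp only [Fin.val_mk]; omega)
          refine ⟨by omega, ?_⟩
          rw [e1, e2]
          exact hadj.symm
        · exact Or.inr (by omega)
    · rintro (h | h)
      · have := hstep i.val (by omega)
        have e1 : (⟨i.val + 1, by omega⟩ : Fin m.length) = j := Fin.ext (by simp only [Fin.val_mk]; omega)
        rwa [e1] at this
      · have := hstep j.val (by omega)
        have e1 : (⟨j.val + 1, by omega⟩ : Fin m.length) = i := Fin.ext (by simp only [Fin.val_mk]; omega)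
        rw [e1] at this
        exact this.symm

lemma reachable_induce {V : Type*} {G : SimpleGraph V} {S : Set V} {v w : V} (p : G.Walk v w)
    (hp : ∀ x ∈ p.support, x ∈ S) :
    (G.induce S).Reachable ⟨v, hp v p.start_mem_support⟩ ⟨w, hp w p.end_mem_support⟩ := by
  induction p with
  | nil => rfl
  | @cons u b w h q ih =>
    have hu : u ∈ S := hp u (by simp)
    have hb : b ∈ S := hp b (by simp)
    have hq : ∀ x ∈ q.support, x ∈ S := fun x hx => hp x (by simp [hx])
    have hadj : (G.induce S).Adj ⟨u, hu⟩ ⟨b, hb⟩ := by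
      simp only [comap_adj, Function.Embedding.coe_subtype]
      exact h
    exact (hadj.reachable).trans (ih hq)

lemma induce_supp_connected {V : Type*} {G : SimpleGraph V} (c : G.ConnectedComponent) :
    (G.induce c.supp).Connected := by
  classical
  obtain ⟨v, hv⟩ := c.exists_rep
  have hne : Nonempty (c.supp) := ⟨⟨v, by rwa [ConnectedComponent.mem_supp_iff]⟩⟩
  refine ⟨?_⟩
  rintro ⟨x, hx⟩ ⟨y, hy⟩
  rw [ConnectedComponent.mem_supp_iff] at hx hy
  obtain ⟨p⟩ : G.Reachable x y := ConnectedComponent.exact (hx.trans hy.symm)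
  have hmem : ∀ z ∈ p.support, z ∈ c.supp := by
    intro z hz
    rw [ConnectedComponent.mem_supp_iff, ← hx]
    exact (ConnectedComponent.sound ⟨p.takeUntil z hz⟩).symm
  exact reachable_induce p hmem


theorem main_aux {V α : Type*} [Fintype V] (G : SimpleGraph V) (hclaw : _root_.Free claw G)
    (C : G.Coloring α) (a b : α) (S : Set V) (hSsub : ∀ v ∈ S, C v = a ∨ C v = b) :
    ∀ c : (G.induce S).ConnectedComponent,
      IsPathGraph ((G.induce S).induce c.supp) ∨
      IsCycleGraph ((G.induce S).induce c.supp) := by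
  classical
  intro c
  haveI : Fintype ↥c.supp := Fintype.ofFinite _
  have hconn : ((G.induce S).induce c.supp).Connected := induce_supp_connected c
  have hdeg : ∀ v x y z : ↥c.supp, ((G.induce S).induce c.supp).Adj v x →
      ((G.induce S).induce c.supp).Adj v y → ((G.induce S).induce c.supp).Adj v z →
      x = y ∨ x = z ∨ y = z := by
    intro v x y z hx hy hz
    by_contra hcon
    push_neg at hcon
    obtain ⟨hxy, hxz, hyz⟩ := hcon
    have gx : G.Adj ↑↑v ↑↑x := hx
    have gy : G.Adj ↑↑v ↑↑y := hy
    have gz : G.Adj ↑↑v ↑↑z := hz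
    have hSmem : ∀ u : ↥c.supp, C ↑↑u = a ∨ C ↑↑u = b := fun u => hSsub _ u.val.property
    have colx : C ↑↑x ≠ C ↑↑v := (C.valid gx).symm
    have coly : C ↑↑y ≠ C ↑↑v := (C.valid gy).symm
    have colz : C ↑↑z ≠ C ↑↑v := (C.valid gz).symm
    have colxy : C ↑↑x = C ↑↑y := by
      rcases hSmem v with h | h <;> rcases hSmem x with h1 | h1 <;>
        rcases hSmem y with h2 | h2 <;> simp_all
    have colxz : C ↑↑x = C ↑↑z := by
      rcases hSmem v with h | h <;> rcases hSmem x with h1 | h1 <;>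
        rcases hSmem z with h2 | h2 <;> simp_all
    have nxy : ¬ G.Adj ↑↑x ↑↑y := fun h => C.valid h colxy
    have nxz : ¬ G.Adj ↑↑x ↑↑z := fun h => C.valid h colxz
    have nyz : ¬ G.Adj ↑↑y ↑↑z := fun h => C.valid h (colxy ▸ colxz)
    have exy : (↑↑x : V) ≠ ↑↑y := fun h => hxy (Subtype.ext (Subtype.ext h))
    have exz : (↑↑x : V) ≠ ↑↑z := fun h => hxz (Subtype.ext (Subtype.ext h))
    have eyz : (↑↑y : V) ≠ ↑↑z := fun h => hyz (Subtype.ext (Subtype.ext h))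
    have emb : claw ↪g G := by
      refine ⟨⟨Sum.elim (fun _ => (↑↑v : V)) (fun i => ![(↑↑x : V), ↑↑y, ↑↑z] i), ?_⟩, ?_⟩
      · rintro (i | i) (j | j) h
        · simp [Fin.eq_zero i, Fin.eq_zero j]
        · exfalso; revert h; fin_cases j <;>
            simp only [Sum.elim_inl, Sum.elim_inr, Matrix.cons_val_zero, Matrix.cons_val_one,
              Matrix.head_cons, Matrix.cons_val_two, Matrix.tail_cons] <;>
            first
              | exact fun h => gx.ne h
              | exact fun h => gy.ne h
              | exact fun h => gz.ne h
        · exfalso; revert h; fin_cases i <;>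
            simp only [Sum.elim_inl, Sum.elim_inr, Matrix.cons_val_zero, Matrix.cons_val_one,
              Matrix.head_cons, Matrix.cons_val_two, Matrix.tail_cons] <;>
            first
              | exact fun h => gx.ne h.symm
              | exact fun h => gy.ne h.symm
              | exact fun h => gz.ne h.symm
        · have : i = j := by
            revert h; fin_cases i <;> fin_cases j <;>
              simp only [Sum.elim_inr, Matrix.cons_val_zero, Matrix.cons_val_one,
                Matrix.head_cons, Matrix.cons_val_two, Matrix.tail_cons] <;>
              intro h <;> first
                | rfl
                | exact absurd h exy | exact absurd h.symm exy
                | exact absurd h exz | exact absurd h.symm exz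
                | exact absurd h eyz | exact absurd h.symm eyz
                | simp
          rw [this]
      · rintro (i | i) (j | j)
        · constructor
          · intro h; exact absurd h (G.irrefl)
          · intro h; simp [claw] at h
        · constructor
          · intro _; simp [claw]
          · intro _; fin_cases j <;>
              simpa using (by first | exact gx | exact gy | exact gz : G.Adj _ _)
        · constructor
          · intro _; simp [claw]
          · intro _; fin_cases i <;>
              simpa using (by first | exact gx.symm | exact gy.symm | exact gz.symm : G.Adj _ _)
        · constructor
          · intro h
            exfalso; revert h; fin_cases i <;> fin_cases j <;>
              simp only [Function.Embedding.coeFn_mk, Sum.elim_inr, Matrix.cons_val_zero,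
                Matrix.cons_val_one, Matrix.head_cons, Matrix.cons_val_two, Matrix.tail_cons] <;>
              intro h <;> first
                | exact G.irrefl h
                | exact nxy h | exact nxy h.symm
                | exact nxz h | exact nxz h.symm
                | exact nyz h | exact nyz h.symm
          · intro h; simp [claw] at h
      
    exact hclaw.false emb
  exact path_or_cycle _ hconn hdeg

end Aux

theorem stmt_0 {V α : Type*} [Fintype V] (G : SimpleGraph V) (hclaw : _root_.Free claw G)
    (C : G.Coloring α) (a b : α) :
    ∀ c : (G.induce {v | C v = a ∨ C v = b}).ConnectedComponent,
      IsPathGraph ((G.induce {v | C v = a ∨ C v = b}).induce c.supp) ∨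
      IsCycleGraph ((G.induce {v | C v = a ∨ C v = b}).induce c.supp) := by
  intro c
  exact main_aux G hclaw C a b _ (fun v hv => hv) c
end

section
/- Let G be a finite simple graph that is both K_{1,3}-free and ((K_2 ∪ K_1) + K_2)-free. Then for every vertex u, if Q is a maximum clique in the induced subgraph on N(u) and R = N(u) \ Q, then at least one of the following holds: (1) the induced subgraph on N(u) is a 5-cycle; (2) the induced subgraph on N(u) is a path on 4 vertices; (3) R induces a complete graph and every vertex of R is nonadjacent to exactly one vertex of Q, and distinct vertices of R are nonadjacent to distinct vertices of Q; (4) R induces a complete graph and there are no edges between R and Q. -/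
open SimpleGraph

lemma noClaw {V : Type*} {G : SimpleGraph V} (h : _root_.Free claw G) {c a b d : V}
    (h1 : G.Adj c a) (h2 : G.Adj c b) (h3 : G.Adj c d)
    (n1 : ¬ G.Adj a b) (n2 : ¬ G.Adj a d) (n3 : ¬ G.Adj b d)
    (e1 : a ≠ b) (e2 : a ≠ d) (e3 : b ≠ d) : False := by
  apply h.false
  refine ⟨⟨Sum.elim (fun _ => c) (![a, b, d]), ?_⟩, ?_⟩
  · rintro (x | x) (y | y) hxy
    · simp [Subsingleton.elim x y]
    · exfalso; fin_cases y <;> simp_all <;>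
        first
          | exact G.irrefl (hxy ▸ h1) | exact G.irrefl (hxy ▸ h2) | exact G.irrefl (hxy ▸ h3)
    · exfalso; fin_cases x <;> simp_all <;>
        first
          | exact G.irrefl (hxy ▸ h1) | exact G.irrefl (hxy ▸ h2) | exact G.irrefl (hxy ▸ h3)
    · fin_cases x <;> fin_cases y <;> simp_all
  · rintro (x | x) (y | y) <;> fin_cases x <;> fin_cases y <;>
      simp_all [claw, completeBipartiteGraph] <;>
      first
        | exact h1 | exact h2 | exact h3
        | exact fun h' => n1 h' | exact fun h' => n1 h'.symm
        | exact fun h' => n2 h' | exact fun h' => n2 h'.symm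
        | exact fun h' => n3 h' | exact fun h' => n3 h'.symm
        | exact h1.symm | exact h2.symm | exact h3.symm
        | exact G.irrefl

lemma noKK {V : Type*} {G : SimpleGraph V} (h : _root_.Free kkJoin G) {a b c d e : V}
    (hab : G.Adj a b) (hde : G.Adj d e) (had : G.Adj a d) (hae : G.Adj a e)
    (hbd : G.Adj b d) (hbe : G.Adj b e) (hcd : G.Adj c d) (hce : G.Adj c e)
    (nac : ¬ G.Adj a c) (nbc : ¬ G.Adj b c) (eac : a ≠ c) (ebc : b ≠ c) : False := by
  have n01 := hab.ne; have n34 := hde.ne; have n03 := had.ne; have n04 := hae.ne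
  have n13 := hbd.ne; have n14 := hbe.ne; have n23 := hcd.ne; have n24 := hce.ne
  apply h.false
  refine ⟨⟨![a, b, c, d, e], ?_⟩, ?_⟩
  · intro x y hxy
    fin_cases x <;> fin_cases y <;> simp_all
  · intro x y
    fin_cases x <;> fin_cases y <;>
      simp [kkJoin] <;>
      first
        | exact hab | exact hde | exact had | exact hae | exact hbd | exact hbe
        | exact hcd | exact hce
        | exact hab.symm | exact hde.symm | exact had.symm | exact hae.symm
        | exact hbd.symm | exact hbe.symm | exact hcd.symm | exact hce.symm
        | exact nac | exact nbc
        | exact fun h' => nac h'.symm | exact fun h' => nbc h'.symm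
        | exact G.irrefl

lemma isoOfList {V : Type*} (G : SimpleGraph V) (S : Set V) {n : ℕ} (H : SimpleGraph (Fin n))
    (f : Fin n → V) (hmem : ∀ i, f i ∈ S) (hsurj : ∀ x ∈ S, ∃ i, f i = x)
    (hinj : Function.Injective f)
    (hadj : ∀ i j, G.Adj (f i) (f j) ↔ H.Adj i j) :
    Nonempty (G.induce S ≃g H) := by
  have hbij : Function.Bijective (fun i => (⟨f i, hmem i⟩ : S)) := by
    constructor
    · intro i j hij
      exact hinj (congrArg Subtype.val hij)
    · rintro ⟨x, hx⟩
      obtain ⟨i, hi⟩ := hsurj x hx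
      exact ⟨i, Subtype.ext hi⟩
  refine ⟨(RelIso.mk (Equiv.ofBijective _ hbij) ?_).symm⟩
  intro i j
  simp only [Equiv.ofBijective_apply, comap_adj, Function.Embedding.coe_subtype]
  exact hadj i j

lemma inj4 {V : Type*} {a b c d : V} (h1 : a ≠ b) (h2 : a ≠ c) (h3 : a ≠ d)
    (h4 : b ≠ c) (h5 : b ≠ d) (h6 : c ≠ d) : Function.Injective ![a, b, c, d] := by
  intro x y h
  fin_cases x <;> fin_cases y <;> simp_all

lemma inj5 {V : Type*} {a b c d e : V} (h1 : a ≠ b) (h2 : a ≠ c) (h3 : a ≠ d) (h4 : a ≠ e)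
    (h5 : b ≠ c) (h6 : b ≠ d) (h7 : b ≠ e) (h8 : c ≠ d) (h9 : c ≠ e) (h10 : d ≠ e) :
    Function.Injective ![a, b, c, d, e] := by
  intro x y h
  fin_cases x <;> fin_cases y <;> simp_all

lemma path4_adj {V : Type*} (G : SimpleGraph V) {a b c d : V}
    (hab : G.Adj a b) (hbc : G.Adj b c) (hcd : G.Adj c d)
    (nac : ¬G.Adj a c) (nad : ¬G.Adj a d) (nbd : ¬G.Adj b d) :
    ∀ i j, G.Adj (![a, b, c, d] i) (![a, b, c, d] j) ↔ (pathGraph 4).Adj i j := by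
  intro i j
  fin_cases i <;> fin_cases j <;>
    simp only [Matrix.cons_val_zero, Matrix.cons_val_one, Matrix.head_cons,
      Matrix.cons_val_two, Matrix.tail_cons, Matrix.cons_val_three] <;>
    first
      | exact iff_of_true hab (by rw [pathGraph_adj]; decide)
      | exact iff_of_true hbc (by rw [pathGraph_adj]; decide)
      | exact iff_of_true hcd (by rw [pathGraph_adj]; decide)
      | exact iff_of_true hab.symm (by rw [pathGraph_adj]; decide)
      | exact iff_of_true hbc.symm (by rw [pathGraph_adj]; decide)
      | exact iff_of_true hcd.symm (by rw [pathGraph_adj]; decide)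
      | exact iff_of_false (G.irrefl) (by rw [pathGraph_adj]; decide)
      | exact iff_of_false nac (by rw [pathGraph_adj]; decide)
      | exact iff_of_false nad (by rw [pathGraph_adj]; decide)
      | exact iff_of_false nbd (by rw [pathGraph_adj]; decide)
      | exact iff_of_false (fun h => nac h.symm) (by rw [pathGraph_adj]; decide)
      | exact iff_of_false (fun h => nad h.symm) (by rw [pathGraph_adj]; decide)
      | exact iff_of_false (fun h => nbd h.symm) (by rw [pathGraph_adj]; decide)

lemma cycle5_adj {V : Type*} (G : SimpleGraph V) {a b c d e : V}
    (hab : G.Adj a b) (hbc : G.Adj b c) (hcd : G.Adj c d) (hde : G.Adj d e) (hea : G.Adj e a)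
    (nac : ¬G.Adj a c) (nad : ¬G.Adj a d) (nbd : ¬G.Adj b d) (nbe : ¬G.Adj b e)
    (nce : ¬G.Adj c e) :
    ∀ i j, G.Adj (![a, b, c, d, e] i) (![a, b, c, d, e] j) ↔ (cycleGraph 5).Adj i j := by
  intro i j
  fin_cases i <;> fin_cases j <;>
    simp only [Matrix.cons_val_zero, Matrix.cons_val_one, Matrix.head_cons,
      Matrix.cons_val_two, Matrix.tail_cons, Matrix.cons_val_three, Matrix.cons_val_four] <;>
    first
      | exact iff_of_true hab (by decide)
      | exact iff_of_true hbc (by decide)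
      | exact iff_of_true hcd (by decide)
      | exact iff_of_true hde (by decide)
      | exact iff_of_true hea (by decide)
      | exact iff_of_true hab.symm (by decide)
      | exact iff_of_true hbc.symm (by decide)
      | exact iff_of_true hcd.symm (by decide)
      | exact iff_of_true hde.symm (by decide)
      | exact iff_of_true hea.symm (by decide)
      | exact iff_of_false (G.irrefl) (by decide)
      | exact iff_of_false nac (by decide)
      | exact iff_of_false nad (by decide)
      | exact iff_of_false nbd (by decide)
      | exact iff_of_false nbe (by decide)
      | exact iff_of_false nce (by decide)
      | exact iff_of_false (fun h => nac h.symm) (by decide)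
      | exact iff_of_false (fun h => nad h.symm) (by decide)
      | exact iff_of_false (fun h => nbd h.symm) (by decide)
      | exact iff_of_false (fun h => nbe h.symm) (by decide)
      | exact iff_of_false (fun h => nce h.symm) (by decide)

set_option maxHeartbeats 1000000 in
theorem stmt_1 {V : Type*} [Fintype V] (G : SimpleGraph V)
    (hclaw : _root_.Free claw G) (hkk : _root_.Free kkJoin G) (u : V)
    (Q : Finset V) (hQclique : G.IsClique ↑Q) (hQsub : ↑Q ⊆ G.neighborSet u)
    (hQmax : ∀ Q' : Finset V, G.IsClique ↑Q' → ↑Q' ⊆ G.neighborSet u → Q'.card ≤ Q.card)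
    (R : Set V) (hR : R = G.neighborSet u \ ↑Q) :
    Nonempty (G.induce (G.neighborSet u) ≃g cycleGraph 5) ∨
    Nonempty (G.induce (G.neighborSet u) ≃g pathGraph 4) ∨
    (G.IsClique R ∧ (∀ r ∈ R, ∃! q, q ∈ Q ∧ ¬ G.Adj r q) ∧
      (∀ r ∈ R, ∀ r' ∈ R, ∀ q ∈ Q, r ≠ r' → ¬ G.Adj r q → ¬ G.Adj r' q → False)) ∨
    (G.IsClique R ∧ ∀ r ∈ R, ∀ q ∈ Q, ¬ G.Adj r q) := by
  classical
  subst hR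
  have huQ : ∀ {q}, q ∈ Q → G.Adj u q := fun {q} hq => hQsub (Finset.mem_coe.mpr hq)
  have hQadj : ∀ {p q}, p ∈ Q → q ∈ Q → p ≠ q → G.Adj p q := fun {p q} hp hq h =>
    hQclique (Finset.mem_coe.mpr hp) (Finset.mem_coe.mpr hq) h
  have clawU : ∀ {a b d : V}, G.Adj u a → G.Adj u b → G.Adj u d →
      ¬G.Adj a b → ¬G.Adj a d → ¬G.Adj b d → a ≠ b → a ≠ d → b ≠ d → False :=
    fun ha hb hd n1 n2 n3 e1 e2 e3 => noClaw hclaw ha hb hd n1 n2 n3 e1 e2 e3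
  have P2 : ∀ {e a b c : V}, G.Adj u e → G.Adj u a → G.Adj u b → G.Adj u c →
      G.Adj e a → G.Adj e b → G.Adj e c → G.Adj a b → ¬ G.Adj a c → ¬ G.Adj b c → False := by
    intro e a b c hue hua hub huc hea heb hec hab nac nbc
    exact noKK hkk hab hue.symm hea.symm hua.symm heb.symm hub.symm hec.symm huc.symm
      nac nbc (fun h => nbc ((h ▸ hab).symm)) (fun h => nac ((h ▸ hab.symm).symm))
  have hadd : ∀ r, G.Adj u r → r ∉ Q → ∃ q ∈ Q, ¬ G.Adj r q := by
    intro r hur hrQ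
    by_contra hcon
    push_neg at hcon
    have hclq : G.IsClique ↑(insert r Q) := by
      intro x hx y hy hxy
      simp only [Finset.coe_insert, Set.mem_insert_iff, Finset.mem_coe] at hx hy
      rcases hx with rfl | hx <;> rcases hy with rfl | hy
      · exact absurd rfl hxy
      · exact hcon y hy
      · exact (hcon x hx).symm
      · exact hQadj hx hy hxy
    have hsub : ↑(insert r Q) ⊆ G.neighborSet u := by
      intro x hx
      simp only [Finset.coe_insert, Set.mem_insert_iff, Finset.mem_coe] at hx
      rcases hx with rfl | hx
      · exact hur
      · exact huQ hx
    have := hQmax _ hclq hsub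
    rw [Finset.card_insert_of_notMem hrQ] at this
    omega
  by_cases hRclq : G.IsClique (G.neighborSet u \ ↑Q)
  · -- R is a clique
    by_cases h4 : ∀ r ∈ G.neighborSet u \ (↑Q : Set V), ∀ q ∈ Q, ¬ G.Adj r q
    · exact Or.inr (Or.inr (Or.inr ⟨hRclq, h4⟩))
    push_neg at h4
    obtain ⟨r1, hr1R, q0, hq0Q, har1q0⟩ := h4
    obtain ⟨hur1, hr1Q⟩ := hr1R
    rw [Finset.mem_coe] at hr1Q
    by_cases hone : ∀ r ∈ G.neighborSet u \ (↑Q : Set V), ∀ q ∈ Q, ∀ q' ∈ Q,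
        q ≠ q' → ¬G.Adj r q → ¬G.Adj r q' → False
    · -- case 3
      refine Or.inr (Or.inr (Or.inl ⟨hRclq, ?_, ?_⟩))
      · intro r hrR
        obtain ⟨hur, hrQ⟩ := hrR
        rw [Finset.mem_coe] at hrQ
        obtain ⟨q, hqQ, hnq⟩ := hadd r hur hrQ
        refine ⟨q, ⟨hqQ, hnq⟩, ?_⟩
        rintro q' ⟨hq'Q, hnq'⟩
        by_contra hne
        exact hone r ⟨hur, fun h => hrQ (Finset.mem_coe.mp h)⟩ q' hq'Q q hqQ hne hnq' hnq
      · intro r hrR r' hr'R q hqQ hrr' hnq hn'q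
        obtain ⟨hur, hrQ⟩ := hrR
        obtain ⟨hur', hr'Q⟩ := hr'R
        rw [Finset.mem_coe] at hrQ hr'Q
        have hradj : ∀ p ∈ Q, p ≠ q → G.Adj r p := by
          intro p hp hpq
          by_contra hn
          exact hone r ⟨hur, fun h => hrQ (Finset.mem_coe.mp h)⟩ p hp q hqQ hpq hn hnq
        have hr'adj : ∀ p ∈ Q, p ≠ q → G.Adj r' p := by
          intro p hp hpq
          by_contra hn
          exact hone r' ⟨hur', fun h => hr'Q (Finset.mem_coe.mp h)⟩ p hp q hqQ hpq hn hn'q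
        have hrr'adj : G.Adj r r' := hRclq ⟨hur, fun h => hrQ h⟩ ⟨hur', fun h => hr'Q h⟩ hrr'
        have hclq : G.IsClique ↑(insert r (insert r' (Q.erase q))) := by
          intro x hx y hy hxy
          simp only [Finset.coe_insert, Set.mem_insert_iff, Finset.mem_coe,
            Finset.mem_erase] at hx hy
          rcases hx with rfl | rfl | ⟨hxq, hx⟩ <;> rcases hy with rfl | rfl | ⟨hyq, hy⟩
          · exact absurd rfl hxy
          · exact hrr'adj
          · exact hradj y hy hyq
          · exact hrr'adj.symm
          · exact absurd rfl hxy
          · exact hr'adj y hy hyq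
          · exact (hradj x hx hxq).symm
          · exact (hr'adj x hx hxq).symm
          · exact hQadj hx hy hxy
        have hsub : ↑(insert r (insert r' (Q.erase q))) ⊆ G.neighborSet u := by
          intro x hx
          simp only [Finset.coe_insert, Set.mem_insert_iff, Finset.mem_coe,
            Finset.mem_erase] at hx
          rcases hx with rfl | rfl | ⟨_, hx⟩
          · exact hur
          · exact hur'
          · exact huQ hx
        have hle := hQmax _ hclq hsub
        have h1 : r ∉ insert r' (Q.erase q) := by
          simp only [Finset.mem_insert, Finset.mem_erase]
          push_neg
          exact ⟨hrr', fun _ => hrQ⟩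
        have h2 : r' ∉ Q.erase q := fun h => hr'Q (Finset.mem_of_mem_erase h)
        rw [Finset.card_insert_of_notMem h1, Finset.card_insert_of_notMem h2,
          Finset.card_erase_of_mem hqQ] at hle
        have : 1 ≤ Q.card := Finset.card_pos.mpr ⟨q, hqQ⟩
        omega
    · -- some vertex nonadjacent to two of Q: leads to P4
      push_neg at hone
      obtain ⟨r0, hr0R, q, hqQ, q', hq'Q, hqq', hnr0q, hnr0q', -⟩ := hone
      obtain ⟨hur0, hr0Q⟩ := hr0R
      rw [Finset.mem_coe] at hr0Q
      have hr0all : ∀ p ∈ Q, ¬ G.Adj r0 p := by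
        intro p hp hadjp
        have hpq : p ≠ q := fun h => hnr0q (h ▸ hadjp)
        have hpq' : p ≠ q' := fun h => hnr0q' (h ▸ hadjp)
        exact P2 (huQ hp) (huQ hqQ) (huQ hq'Q) hur0 (hQadj hp hqQ hpq)
          (hQadj hp hq'Q hpq') hadjp.symm (hQadj hqQ hq'Q hqq')
          (fun h => hnr0q h.symm) (fun h => hnr0q' h.symm)
      have hr1r0ne : r1 ≠ r0 := fun h => hr0all q0 hq0Q (h ▸ har1q0)
      have hr1r0 : G.Adj r1 r0 := hRclq ⟨hur1, fun h => hr1Q h⟩ ⟨hur0, fun h => hr0Q h⟩ hr1r0ne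
      have hr1one : ∀ p ∈ Q, p ≠ q0 → ¬ G.Adj r1 p := by
        intro p hp hpq0 hadjp
        exact P2 hur1 (huQ hq0Q) (huQ hp) hur0 har1q0 hadjp hr1r0
          (hQadj hq0Q hp (Ne.symm hpq0)) (fun h => hr0all q0 hq0Q h.symm)
          (fun h => hr0all p hp h.symm)
      obtain ⟨q2, hq2Q, hnr1q2⟩ := hadd r1 hur1 hr1Q
      have hq2q0 : q2 ≠ q0 := fun h => hnr1q2 (h ▸ har1q0)
      have hQ2 : ∀ p ∈ Q, p = q0 ∨ p = q2 := by
        intro p hp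
        by_contra hc
        push_neg at hc
        obtain ⟨h0, h2⟩ := hc
        exact P2 (huQ hq0Q) (huQ hq2Q) (huQ hp) hur1 (hQadj hq0Q hq2Q (Ne.symm hq2q0))
          (hQadj hq0Q hp (Ne.symm h0)) har1q0.symm (hQadj hq2Q hp (Ne.symm h2))
          (fun h => hnr1q2 h.symm) (fun h => (hr1one p hp h0) h.symm)
      have hcard2 : Q.card ≤ 2 := by
        have : Q ⊆ {q0, q2} := by
          intro p hp
          simp only [Finset.mem_insert, Finset.mem_singleton]
          exact hQ2 p hp
        calc Q.card ≤ ({q0, q2} : Finset V).card := Finset.card_le_card this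
          _ ≤ 2 := Finset.card_insert_le _ _ |>.trans (by simp)
      have htri : ∀ {x y z : V}, G.Adj u x → G.Adj u y → G.Adj u z →
          G.Adj x y → G.Adj x z → G.Adj y z → False := by
        intro x y z hx hy hz hxy hxz hyz
        have hclq : G.IsClique ↑({x, y, z} : Finset V) := by
          intro a ha b hb hab
          simp only [Finset.coe_insert, Set.mem_insert_iff, Finset.coe_singleton,
            Set.mem_singleton_iff] at ha hb
          rcases ha with rfl | rfl | rfl <;> rcases hb with rfl | rfl | rfl <;>
            first
              | exact absurd rfl hab
              | assumption
              | exact hxy.symm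
              | exact hxz.symm
              | exact hyz.symm
        have hsub : ↑({x, y, z} : Finset V) ⊆ G.neighborSet u := by
          intro a ha
          simp only [Finset.coe_insert, Set.mem_insert_iff, Finset.coe_singleton,
            Set.mem_singleton_iff] at ha
          rcases ha with rfl | rfl | rfl <;> assumption
        have hle := hQmax _ hclq hsub
        have hcard : ({x, y, z} : Finset V).card = 3 := by
          rw [Finset.card_insert_of_notMem, Finset.card_insert_of_notMem, Finset.card_singleton]
          · simp only [Finset.mem_singleton]; exact hyz.ne
          · simp only [Finset.mem_insert, Finset.mem_singleton]
            push_neg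
            exact ⟨hxy.ne, hxz.ne⟩
        omega
      have hnr1q2' : ¬ G.Adj r1 q2 := hnr1q2
      have hR2 : ∀ r'' , G.Adj u r'' → r'' ∉ Q → r'' = r0 ∨ r'' = r1 := by
        intro r'' hur'' hr''Q
        by_contra hc
        push_neg at hc
        obtain ⟨h0, h1⟩ := hc
        have hr''r0 : G.Adj r'' r0 := hRclq ⟨hur'', fun h => hr''Q h⟩ ⟨hur0, fun h => hr0Q h⟩ h0
        have hr''r1 : G.Adj r'' r1 := hRclq ⟨hur'', fun h => hr''Q h⟩ ⟨hur1, fun h => hr1Q h⟩ h1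
        by_cases hA : G.Adj r'' q0
        · exact htri hur1 hur'' (huQ hq0Q) hr''r1.symm har1q0 hA
        by_cases hB : G.Adj r'' q2
        · exact P2 hur'' hur1 hur0 (huQ hq2Q) hr''r1 hr''r0 hB hr1r0
            hnr1q2' (hr0all q2 hq2Q)
        · exact P2 hur1 hur0 hur'' (huQ hq0Q) hr1r0 hr''r1.symm har1q0 hr''r0.symm
            (hr0all q0 hq0Q) hA
      -- S = {q2, q0, r1, r0} induces P4
      refine Or.inr (Or.inl ?_)
      have hq0r1 : q0 ≠ r1 := fun h => hr1Q (h ▸ hq0Q)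
      have hq2r1 : q2 ≠ r1 := fun h => hr1Q (h ▸ hq2Q)
      have hq0r0 : q0 ≠ r0 := fun h => hr0Q (h ▸ hq0Q)
      have hq2r0 : q2 ≠ r0 := fun h => hr0Q (h ▸ hq2Q)
      apply isoOfList G (G.neighborSet u) (pathGraph 4) ![q2, q0, r1, r0]
      · intro i
        fin_cases i <;>
          first
            | exact huQ hq2Q | exact huQ hq0Q | exact hur1 | exact hur0
      · intro x hx
        have hx' : G.Adj u x := hx
        by_cases hxQ : x ∈ Q
        · rcases hQ2 x hxQ with rfl | rfl
          · exact ⟨1, rfl⟩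
          · exact ⟨0, rfl⟩
        · rcases hR2 x hx' hxQ with rfl | rfl
          · exact ⟨3, rfl⟩
          · exact ⟨2, rfl⟩
      · exact inj4 hq2q0 hq2r1 hq2r0 hq0r1 hq0r0 hr1r0ne
      · exact path4_adj G (hQadj hq2Q hq0Q hq2q0) har1q0.symm hr1r0
          (fun h => hnr1q2 h.symm) (fun h => (hr0all q2 hq2Q) h.symm)
          (fun h => (hr0all q0 hq0Q) h.symm)
  · -- R is not a clique
    rw [SimpleGraph.isClique_iff] at hRclq
    rw [Set.Pairwise] at hRclq
    push_neg at hRclq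
    obtain ⟨r1, hr1R, r2, hr2R, hne12, hnadj⟩ := hRclq
    obtain ⟨hur1, hr1Q⟩ := hr1R
    obtain ⟨hur2, hr2Q⟩ := hr2R
    rw [Finset.mem_coe] at hr1Q hr2Q
    obtain ⟨q1, hq1Q, hnr1q1⟩ := hadd r1 hur1 hr1Q
    obtain ⟨q2, hq2Q, hnr2q2⟩ := hadd r2 hur2 hr2Q
    have hr1q1 : r1 ≠ q1 := fun h => hr1Q (h ▸ hq1Q)
    have hr2q1 : r2 ≠ q1 := fun h => hr2Q (h ▸ hq1Q)
    have hr1q2 : r1 ≠ q2 := fun h => hr1Q (h ▸ hq2Q)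
    have hr2q2 : r2 ≠ q2 := fun h => hr2Q (h ▸ hq2Q)
    have hq1r2 : G.Adj r2 q1 := by
      by_contra hn
      exact clawU hur1 hur2 (huQ hq1Q) hnadj hnr1q1 hn hne12 hr1q1 hr2q1
    have hq2r1 : G.Adj r1 q2 := by
      by_contra hn
      exact clawU hur2 hur1 (huQ hq2Q) (fun h => hnadj h.symm) hnr2q2 hn
        (Ne.symm hne12) hr2q2 hr1q2
    have hq12 : q1 ≠ q2 := fun h => hnr2q2 (h ▸ hq1r2)
    have hq1q2 : G.Adj q1 q2 := hQadj hq1Q hq2Q hq12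
    have hQ2 : ∀ p ∈ Q, p = q1 ∨ p = q2 := by
      intro p hp
      by_contra hc
      push_neg at hc
      obtain ⟨h1, h2⟩ := hc
      have hqq1 : G.Adj p q1 := hQadj hp hq1Q h1
      have hqq2 : G.Adj p q2 := hQadj hp hq2Q h2
      have hr1p : G.Adj r1 p := by
        by_contra hn
        exact P2 (huQ hq2Q) (huQ hp) (huQ hq1Q) hur1 hqq2.symm hq1q2.symm hq2r1.symm
          hqq1 (fun h => hn h.symm) (fun h => hnr1q1 h.symm)
      have hr2p : G.Adj r2 p := by
        by_contra hn
        exact P2 (huQ hq1Q) (huQ hp) (huQ hq2Q) hur2 hqq1.symm hq1q2 hq1r2.symm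
          hqq2 (fun h => hn h.symm) (fun h => hnr2q2 h.symm)
      exact P2 (huQ hp) (huQ hq2Q) hur1 hur2 hqq2 hr1p.symm hr2p.symm hq2r1.symm
        (fun h => hnr2q2 h.symm) hnadj
    have hcard2 : Q.card ≤ 2 := by
      have : Q ⊆ {q1, q2} := by
        intro p hp
        simp only [Finset.mem_insert, Finset.mem_singleton]
        exact hQ2 p hp
      calc Q.card ≤ ({q1, q2} : Finset V).card := Finset.card_le_card this
        _ ≤ 2 := Finset.card_insert_le _ _ |>.trans (by simp)
    have htri : ∀ {x y z : V}, G.Adj u x → G.Adj u y → G.Adj u z →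
        G.Adj x y → G.Adj x z → G.Adj y z → False := by
      intro x y z hx hy hz hxy hxz hyz
      have hclq : G.IsClique ↑({x, y, z} : Finset V) := by
        intro a ha b hb hab
        simp only [Finset.coe_insert, Set.mem_insert_iff, Finset.coe_singleton,
          Set.mem_singleton_iff] at ha hb
        rcases ha with rfl | rfl | rfl <;> rcases hb with rfl | rfl | rfl <;>
          first
            | exact absurd rfl hab
            | assumption
            | exact hxy.symm
            | exact hxz.symm
            | exact hyz.symm
      have hsub : ↑({x, y, z} : Finset V) ⊆ G.neighborSet u := by
        intro a ha
        simp only [Finset.coe_insert, Set.mem_insert_iff, Finset.coe_singleton,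
          Set.mem_singleton_iff] at ha
        rcases ha with rfl | rfl | rfl <;> assumption
      have hle := hQmax _ hclq hsub
      have hcard : ({x, y, z} : Finset V).card = 3 := by
        rw [Finset.card_insert_of_notMem, Finset.card_insert_of_notMem, Finset.card_singleton]
        · simp only [Finset.mem_singleton]; exact hyz.ne
        · simp only [Finset.mem_insert, Finset.mem_singleton]
          push_neg
          exact ⟨hxy.ne, hxz.ne⟩
      omega
    have hextra : ∀ x, G.Adj u x → x ≠ q1 → x ≠ q2 → x ≠ r1 → x ≠ r2 →
        ¬G.Adj x q1 ∧ ¬G.Adj x q2 ∧ G.Adj x r1 ∧ G.Adj x r2 := by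
      intro x hux hxq1 hxq2 hxr1 hxr2
      have hnq1 : ¬ G.Adj x q1 := by
        intro hadjxq1
        by_cases hq2x : G.Adj x q2
        · exact htri hux (huQ hq1Q) (huQ hq2Q) hadjxq1 hq2x hq1q2
        · have hnxr2 : ¬ G.Adj x r2 := fun h => htri hux (huQ hq1Q) hur2 hadjxq1 h hq1r2.symm
          exact clawU hux hur2 (huQ hq2Q) hnxr2 hq2x (fun h => hnr2q2 h) hxr2 hxq2
            (fun h => hr2Q (h ▸ hq2Q))
      have hnq2 : ¬ G.Adj x q2 := by
        intro hadjxq2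
        have hnxr1 : ¬ G.Adj x r1 := fun h => htri hux (huQ hq2Q) hur1 hadjxq2 h hq2r1.symm
        exact clawU hux hur1 (huQ hq1Q) hnxr1 hnq1 (fun h => hnr1q1 h) hxr1 hxq1
          (fun h => hr1Q (h ▸ hq1Q))
      have hxr1adj : G.Adj x r1 := by
        by_contra hn
        exact clawU hux hur1 (huQ hq1Q) hn hnq1 (fun h => hnr1q1 h) hxr1 hxq1
          (fun h => hr1Q (h ▸ hq1Q))
      have hxr2adj : G.Adj x r2 := by
        by_contra hn
        exact clawU hux hur2 (huQ hq2Q) hn hnq2 (fun h => hnr2q2 h) hxr2 hxq2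
          (fun h => hr2Q (h ▸ hq2Q))
      exact ⟨hnq1, hnq2, hxr1adj, hxr2adj⟩
    by_cases hex : ∃ x, G.Adj u x ∧ x ≠ q1 ∧ x ≠ q2 ∧ x ≠ r1 ∧ x ≠ r2
    · -- C5
      obtain ⟨r3, hur3, h3q1, h3q2, h3r1, h3r2⟩ := hex
      obtain ⟨hn3q1, hn3q2, h3r1adj, h3r2adj⟩ := hextra r3 hur3 h3q1 h3q2 h3r1 h3r2
      have honly : ∀ x, G.Adj u x → x = q1 ∨ x = q2 ∨ x = r1 ∨ x = r2 ∨ x = r3 := by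
        intro x hux
        by_contra hc
        push_neg at hc
        obtain ⟨e1, e2, e3, e4, e5⟩ := hc
        obtain ⟨hn1, hn2, hx1, hx2⟩ := hextra x hux e1 e2 e3 e4
        have hxr3 : G.Adj x r3 := by
          by_contra hn
          exact clawU hux hur3 (huQ hq1Q) hn hn1 hn3q1 e5 e1 h3q1
        exact htri hux hur3 hur1 hxr3 hx1 h3r1adj
      refine Or.inl ?_
      apply isoOfList G (G.neighborSet u) (cycleGraph 5) ![q1, q2, r1, r3, r2]
      · intro i
        fin_cases i <;>
          first
            | exact huQ hq1Q | exact huQ hq2Q | exact hur1 | exact hur2 | exact hur3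
      · intro x hx
        have hx' : G.Adj u x := hx
        rcases honly x hx' with rfl | rfl | rfl | rfl | rfl
        · exact ⟨0, rfl⟩
        · exact ⟨1, rfl⟩
        · exact ⟨2, rfl⟩
        · exact ⟨4, rfl⟩
        · exact ⟨3, rfl⟩
      · exact inj5 hq12 (Ne.symm hr1q1) (Ne.symm h3q1) (Ne.symm hr2q1)
          (Ne.symm hr1q2) (Ne.symm h3q2) (Ne.symm hr2q2) (Ne.symm h3r1) hne12 h3r2
      · exact cycle5_adj G hq1q2 hq2r1.symm h3r1adj.symm h3r2adj hq1r2
          (fun h => hnr1q1 h.symm) (fun h => hn3q1 h.symm) (fun h => hn3q2 h.symm)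
          (fun h => hnr2q2 h.symm) hnadj
    · -- P4
      push_neg at hex
      have honly : ∀ x, G.Adj u x → x = q1 ∨ x = q2 ∨ x = r1 ∨ x = r2 := by
        intro x hux
        rcases eq_or_ne x q1 with h | h1
        · exact Or.inl h
        rcases eq_or_ne x q2 with h | h2
        · exact Or.inr (Or.inl h)
        rcases eq_or_ne x r1 with h | h3
        · exact Or.inr (Or.inr (Or.inl h))
        exact Or.inr (Or.inr (Or.inr (hex x hux h1 h2 h3)))
      refine Or.inr (Or.inl ?_)
      apply isoOfList G (G.neighborSet u) (pathGraph 4) ![r1, q2, q1, r2]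
      · intro i
        fin_cases i <;>
          first
            | exact huQ hq1Q | exact huQ hq2Q | exact hur1 | exact hur2
      · intro x hx
        have hx' : G.Adj u x := hx
        rcases honly x hx' with rfl | rfl | rfl | rfl
        · exact ⟨2, rfl⟩
        · exact ⟨1, rfl⟩
        · exact ⟨0, rfl⟩
        · exact ⟨3, rfl⟩
      · exact inj4 hr1q2 hr1q1 hne12 (Ne.symm hq12) (Ne.symm hr2q2) (Ne.symm hr2q1)
      · exact path4_adj G hq2r1 hq1q2.symm hq1r2.symm hnr1q1 hnadj
          (fun h => hnr2q2 h.symm)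
end

section
/- If G is a finite simple graph that is K_{1,3}-free and ((K_2 ∪ K_1) + K_2)-free, then Δ(G) ≤ 2ω(G) − 1; moreover either Δ(G) = 2ω(G) − 1 with Δ(G) = 5 and ω(G) = 3, or Δ(G) ≤ 2ω(G) − 2. -/
open SimpleGraph

section Aux

open Finset

lemma claw_prop {V : Type*} (G : SimpleGraph V) (h : _root_.Free claw G) {v a b c : V}
    (hva : G.Adj v a) (hvb : G.Adj v b) (hvc : G.Adj v c)
    (hab : a ≠ b) (hac : a ≠ c) (hbc : b ≠ c)
    (nab : ¬G.Adj a b) (nac : ¬G.Adj a c) (nbc : ¬G.Adj b c) : False := by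
  apply h.false
  refine ⟨⟨Sum.elim (fun _ => v) ![a,b,c], ?_⟩, ?_⟩
  · rintro (x|x) (y|y) hxy <;>
      simp only [Sum.elim_inl, Sum.elim_inr] at hxy
    · congr 1; omega
    · exfalso; fin_cases y <;> simp_all
    · exfalso; fin_cases x <;> simp_all
    · congr 1; fin_cases x <;> fin_cases y <;> simp_all
  · rintro (x|x) (y|y) <;>
      simp only [Function.Embedding.coeFn_mk, Sum.elim_inl, Sum.elim_inr, claw,
        completeBipartiteGraph] <;> simp <;> fin_cases x <;> try fin_cases y
    all_goals simp_all [G.irrefl, G.adj_comm, DFunLike.coe]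

set_option maxHeartbeats 1000000 in
lemma kk_prop {V : Type*} (G : SimpleGraph V) (h : _root_.Free kkJoin G) {s t a b c : V}
    (hst : G.Adj s t) (hsa : G.Adj s a) (hsb : G.Adj s b) (hsc : G.Adj s c)
    (hta : G.Adj t a) (htb : G.Adj t b) (htc : G.Adj t c)
    (hab : G.Adj a b) (hac : a ≠ c) (hbc : b ≠ c)
    (nac : ¬G.Adj a c) (nbc : ¬G.Adj b c) : False := by
  apply h.false
  have nca : ¬G.Adj c a := fun h' => nac h'.symm
  have ncb : ¬G.Adj c b := fun h' => nbc h'.symm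
  have ne1 : a ≠ b := hab.ne
  have ne2 : b ≠ a := hab.ne'
  have ne3 : s ≠ a := hsa.ne
  have ne4 : a ≠ s := hsa.ne'
  have ne5 : s ≠ b := hsb.ne
  have ne6 : b ≠ s := hsb.ne'
  have ne7 : s ≠ c := hsc.ne
  have ne8 : c ≠ s := hsc.ne'
  have ne9 : t ≠ a := hta.ne
  have ne10 : a ≠ t := hta.ne'
  have ne11 : t ≠ b := htb.ne
  have ne12 : b ≠ t := htb.ne'
  have ne13 : t ≠ c := htc.ne
  have ne14 : c ≠ t := htc.ne'
  have ne15 : s ≠ t := hst.ne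
  have ne16 : t ≠ s := hst.ne'
  have ne17 : c ≠ a := hac.symm
  have ne18 : c ≠ b := hbc.symm
  have inj : Function.Injective ![a,b,c,s,t] := by
    intro i j hij
    by_contra hne
    revert hij
    fin_cases i <;> fin_cases j <;> simp_all
  refine ⟨⟨![a,b,c,s,t], inj⟩, ?_⟩
  intro i j
  fin_cases i <;> fin_cases j <;>
    (rw [show (kkJoin.Adj _ _) = (kkJoin.Adj _ _) from rfl, kkJoin, fromEdgeSet_adj] <;>
     simp [Sym2.eq, Sym2.rel_iff', Prod.ext_iff, G.irrefl]) <;>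
    first
      | exact hab.symm | exact hst.symm | exact hab | exact hst
      | exact hsa | exact hsb | exact hsc | exact hta | exact htb | exact htc
      | exact hsa.symm | exact hsb.symm | exact hsc.symm
      | exact hta.symm | exact htb.symm | exact htc.symm
      | exact nac | exact nbc | exact nca | exact ncb

lemma halfClique {V : Type*} [DecidableEq V] (G : SimpleGraph V) [DecidableRel G.Adj]
    (C : Finset V)
    (hC : ∀ c ∈ C, ∀ a ∈ C, ∀ b ∈ C, a ≠ b → a ≠ c → b ≠ c →
      ¬G.Adj a c → ¬G.Adj b c → False) :
    ∃ s ⊆ C, G.IsClique ↑s ∧ C.card ≤ 2 * s.card := by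
  generalize hn : C.card = n
  induction n using Nat.strong_induction_on generalizing C with
  | _ n ih =>
  rcases C.eq_empty_or_nonempty with rfl | ⟨x, hx⟩
  · exact ⟨∅, by simp, by simp, by simp [← hn]⟩
  · set D := (C.erase x).filter (fun y => G.Adj x y) with hD
    have hsub : D ⊆ C := (filter_subset _ _).trans (erase_subset _ _)
    have h1 : ((C.erase x).filter (fun y => ¬G.Adj x y)).card ≤ 1 := by
      by_contra h2
      push_neg at h2
      obtain ⟨a, ha, b, hb, hab⟩ := Finset.one_lt_card.mp h2
      simp only [mem_filter, mem_erase] at ha hb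
      exact hC x hx a (mem_of_mem_erase (mem_erase.mpr ⟨ha.1.1, ha.1.2⟩))
        b (mem_of_mem_erase (mem_erase.mpr ⟨hb.1.1, hb.1.2⟩)) hab ha.1.1 hb.1.1
        (fun h => ha.2 h.symm) (fun h => hb.2 h.symm)
    have hcard : C.card ≤ D.card + 2 := by
      have e1 : (C.erase x).card + 1 = C.card := Finset.card_erase_add_one hx
      have e2 : D.card + ((C.erase x).filter (fun y => ¬G.Adj x y)).card
          = (C.erase x).card := by
        rw [hD, Finset.card_filter_add_card_filter_not]
      omega
    have hlt : D.card < n := by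
      have : D.card ≤ (C.erase x).card := Finset.card_le_card (filter_subset _ _)
      have e1 : (C.erase x).card + 1 = C.card := Finset.card_erase_add_one hx
      omega
    obtain ⟨s, hsD, hscl, hsc⟩ := ih D.card hlt D
      (fun c hc a ha b hb => hC c (hsub hc) a (hsub ha) b (hsub hb)) rfl
    have hxs : x ∉ s := fun h => (Finset.mem_erase.mp ((filter_subset _ _) (hsD h))).1 rfl
    refine ⟨insert x s, Finset.insert_subset hx (hsD.trans hsub), ?_, ?_⟩
    · rw [Finset.coe_insert, SimpleGraph.isClique_insert]
      refine ⟨hscl, fun b hb hne => ?_⟩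
      have := hsD (by exact_mod_cast hb)
      exact (Finset.mem_filter.mp this).2
    · rw [Finset.card_insert_of_notMem hxs]
      omega

variable {V : Type*} [DecidableEq V] (G : SimpleGraph V) [DecidableRel G.Adj]

/-- non-neighbours of `u` inside `N`, other than `u`. -/
def nnb (N : Finset V) (u : V) : Finset V := (N.erase u).filter fun w => ¬G.Adj u w

/-- neighbours of `u` inside `N`. -/
def cnb (N : Finset V) (u : V) : Finset V := (N.erase u).filter fun w => G.Adj u w

lemma mem_nnb {N : Finset V} {u w : V} :
    w ∈ nnb G N u ↔ w ∈ N ∧ w ≠ u ∧ ¬G.Adj u w := by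
  simp only [nnb, Finset.mem_filter, Finset.mem_erase]; tauto

lemma mem_cnb {N : Finset V} {u w : V} :
    w ∈ cnb G N u ↔ w ∈ N ∧ w ≠ u ∧ G.Adj u w := by
  simp only [cnb, Finset.mem_filter, Finset.mem_erase]; tauto

lemma nnb_cnb_card {N : Finset V} {u : V} (hu : u ∈ N) :
    (cnb G N u).card + (nnb G N u).card + 1 = N.card := by
  have e1 : (N.erase u).card + 1 = N.card := Finset.card_erase_add_one hu
  have e2 : (cnb G N u).card + (nnb G N u).card = (N.erase u).card := by
    rw [cnb, nnb, Finset.card_filter_add_card_filter_not]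
  omega

end Aux

open Finset in
theorem stmt_2 {V : Type*} [Fintype V] (G : SimpleGraph V)
    (hclaw : _root_.Free claw G) (hkk : _root_.Free kkJoin G) :
    maxDeg G ≤ 2 * G.cliqueNum - 1 ∧
      ((maxDeg G + 1 = 2 * G.cliqueNum ∧ maxDeg G = 5 ∧ G.cliqueNum = 3) ∨
        maxDeg G ≤ 2 * G.cliqueNum - 2) := by
  classical
  letI : DecidableRel G.Adj := Classical.decRel _
  have hmd : maxDeg G = G.maxDegree := by unfold maxDeg; congr
  have hcl : ∀ s : Finset V, G.IsClique ↑s → s.card ≤ G.cliqueNum :=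
    fun s hs => IsClique.card_le_cliqueNum (tc := hs)
  rcases isEmpty_or_nonempty V with hV | hV
  · have h0 : G.maxDegree = 0 :=
      Nat.le_zero.mp (G.maxDegree_le_of_forall_degree_le 0 (fun v => isEmptyElim v))
    rw [hmd, h0]
    exact ⟨Nat.zero_le _, Or.inr (Nat.zero_le _)⟩
  obtain ⟨v, hv⟩ := G.exists_maximal_degree_vertex
  set N := G.neighborFinset v with hNdef
  have hN : N.card = G.maxDegree := by rw [hv, hNdef, card_neighborFinset_eq_degree]
  have hvmem : ∀ w, w ∈ N ↔ G.Adj v w := fun w => mem_neighborFinset G v w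
  by_cases hΔ0 : G.maxDegree = 0
  · rw [hmd, hΔ0]; exact ⟨Nat.zero_le _, Or.inr (Nat.zero_le _)⟩
  have hNne : N.Nonempty := card_pos.mp (by omega)
  have L3 : ∀ u, G.Adj v u → ∀ a b c, G.Adj v a → G.Adj u a → G.Adj v b → G.Adj u b →
      G.Adj v c → G.Adj u c → a ≠ b → a ≠ c → b ≠ c → ¬G.Adj a c → ¬G.Adj b c → False := by
    intro u hu a b c hva hua hvb hub hvc huc hab hac hbc nac nbc
    by_cases h' : G.Adj a b
    · exact kk_prop G hkk hu hva hvb hvc hua hub huc h' hac hbc nac nbc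
    · exact claw_prop G hclaw hva hvb hvc hab hac hbc h' nac nbc
  have key : ∀ u ∈ N, (cnb G N u).card + 4 ≤ 2 * G.cliqueNum := by
    intro u hu
    have hvu : G.Adj v u := (hvmem u).mp hu
    have hcond : ∀ c ∈ cnb G N u, ∀ a ∈ cnb G N u, ∀ b ∈ cnb G N u,
        a ≠ b → a ≠ c → b ≠ c → ¬G.Adj a c → ¬G.Adj b c → False := by
      intro c hc a ha b hb hab hac hbc nac nbc
      rw [mem_cnb] at hc ha hb
      exact L3 u hvu a b c ((hvmem a).mp ha.1) ha.2.2 ((hvmem b).mp hb.1) hb.2.2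
        ((hvmem c).mp hc.1) hc.2.2 hab hac hbc nac nbc
    obtain ⟨s, hsub, hscl, hsc⟩ := halfClique G (cnb G N u) hcond
    have hus : u ∉ s := fun h => ((mem_cnb G).mp (hsub h)).2.1 rfl
    have hvs : v ∉ insert u s := by
      simp only [mem_insert]
      rintro (rfl | h)
      · exact G.irrefl hvu
      · exact G.irrefl ((hvmem v).mp ((mem_cnb G).mp (hsub h)).1)
    have hclq : G.IsClique ↑(insert v (insert u s)) := by
      rw [coe_insert, SimpleGraph.isClique_insert]
      constructor
      · rw [coe_insert, SimpleGraph.isClique_insert]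
        exact ⟨hscl, fun b hb _ => ((mem_cnb G).mp (hsub (by exact_mod_cast hb))).2.2⟩
      · intro b hb _
        have hb2 : b ∈ insert u s := by exact_mod_cast hb
        rcases mem_insert.mp hb2 with rfl | hb'
        · exact hvu
        · exact (hvmem b).mp ((mem_cnb G).mp (hsub hb')).1
    have hω := hcl _ hclq
    rw [card_insert_of_notMem hvs, card_insert_of_notMem hus] at hω
    omega
  by_cases caseA : ∃ u ∈ N, (nnb G N u).card ≤ 1
  · obtain ⟨u, hu, h1⟩ := caseA
    have h2 := key u hu
    have h3 := nnb_cnb_card G hu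
    rw [hmd]
    exact ⟨by omega, Or.inr (by omega)⟩
  by_cases caseB : ∃ u ∈ N, 3 ≤ (nnb G N u).card
  · obtain ⟨u0, hu0, hu03⟩ := caseB
    obtain ⟨x, hxN, hxmax⟩ := N.exists_max_image (fun u => (nnb G N u).card) ⟨u0, hu0⟩
    have hD3 : 3 ≤ (nnb G N x).card := le_trans hu03 (hxmax u0 hu0)
    have hvx : G.Adj v x := (hvmem x).mp hxN
    have hAadj : ∀ a1 ∈ nnb G N x, ∀ a2 ∈ nnb G N x, a1 ≠ a2 → G.Adj a1 a2 := by
      intro a1 h1 a2 h2 hne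
      rw [mem_nnb] at h1 h2
      by_contra hne'
      exact claw_prop G hclaw hvx ((hvmem a1).mp h1.1) ((hvmem a2).mp h2.1)
        h1.2.1.symm h2.2.1.symm hne h1.2.2 h2.2.2 hne'
    have hvA : v ∉ nnb G N x := fun h => G.irrefl ((hvmem v).mp ((mem_nnb G).mp h).1)
    have hAclq : G.IsClique ↑(insert v (nnb G N x)) := by
      rw [coe_insert, SimpleGraph.isClique_insert]
      refine ⟨?_, fun b hb _ => (hvmem b).mp ((mem_nnb G).mp (by exact_mod_cast hb)).1⟩
      intro a ha b hb hne
      exact hAadj a (by exact_mod_cast ha) b (by exact_mod_cast hb) hne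
    have hωD : (nnb G N x).card + 1 ≤ G.cliqueNum := by
      have h' := hcl _ hAclq
      rw [card_insert_of_notMem hvA] at h'
      omega
    have hAB : ∀ a ∈ nnb G N x, ∀ y ∈ cnb G N x, a ≠ y := by
      rintro a ha y hy rfl
      exact ((mem_nnb G).mp ha).2.2 ((mem_cnb G).mp hy).2.2
    have hyA : ∀ y ∈ cnb G N x, (nnb G N x).card - 1 ≤
        ((nnb G N x).filter (fun a => ¬G.Adj y a)).card := by
      intro y hy
      obtain ⟨hyN, hyx, hxy⟩ := (mem_cnb G).mp hy
      have h1 : ((nnb G N x).filter (fun a => G.Adj y a)).card ≤ 1 := by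
        by_contra h2
        push_neg at h2
        obtain ⟨a1, h1', a2, h2', hne⟩ := one_lt_card.mp h2
        simp only [mem_filter] at h1' h2'
        obtain ⟨ha1, hya1⟩ := h1'
        obtain ⟨ha2, hya2⟩ := h2'
        rw [mem_nnb] at ha1 ha2
        exact L3 y ((hvmem y).mp hyN) a1 a2 x ((hvmem a1).mp ha1.1) hya1
          ((hvmem a2).mp ha2.1) hya2 hvx hxy.symm hne ha1.2.1 ha2.2.1
          (fun h => ha1.2.2 h.symm) (fun h => ha2.2.2 h.symm)
      have h3 := Finset.card_filter_add_card_filter_not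
        (s := nnb G N x) (p := fun a => G.Adj y a)
      omega
    have haB : ∀ a ∈ nnb G N x, ((cnb G N x).filter (fun y => ¬G.Adj y a)).card ≤
        (nnb G N x).card - 1 := by
      intro a ha
      obtain ⟨haN, hax, hxa⟩ := (mem_nnb G).mp ha
      have hsub2 : (cnb G N x).filter (fun y => ¬G.Adj y a) ⊆ (nnb G N a).erase x := by
        intro y hy'
        simp only [mem_filter] at hy'
        obtain ⟨hyB, hnadj⟩ := hy'
        obtain ⟨hyN, hyx, hxy⟩ := (mem_cnb G).mp hyB
        rw [mem_erase, mem_nnb]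
        exact ⟨hyx, hyN, (hAB a ha y hyB).symm, fun h => hnadj h.symm⟩
      have hxnna : x ∈ nnb G N a := by
        rw [mem_nnb]
        exact ⟨hxN, hax.symm, fun h => hxa h.symm⟩
      have e1 : ((nnb G N a).erase x).card + 1 = (nnb G N a).card :=
        card_erase_add_one hxnna
      have hfa : (nnb G N a).card ≤ (nnb G N x).card := hxmax a haN
      have := card_le_card hsub2
      omega
    rcases Nat.lt_or_ge (cnb G N x).card (nnb G N x).card with hBlt | hBge
    · have hsp := nnb_cnb_card G hxN
      rw [hmd]
      exact ⟨by omega, Or.inr (by omega)⟩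
    · exfalso
      obtain ⟨a, haA⟩ := card_pos.mp (show 0 < (nnb G N x).card by omega)
      have haB' := haB a haA
      have hex : ∃ y ∈ cnb G N x, G.Adj y a := by
        by_contra h
        push_neg at h
        have : (cnb G N x).filter (fun y => ¬G.Adj y a) = cnb G N x :=
          filter_eq_self.mpr h
        rw [this] at haB'
        omega
      obtain ⟨y, hyB, hya⟩ := hex
      have hsubA : (nnb G N x).filter (fun a' => ¬G.Adj y a') ⊆ (nnb G N x).erase a := by
        intro a' h'
        simp only [mem_filter] at h'
        rw [mem_erase]
        exact ⟨fun he => (he ▸ h'.2) hya, h'.1⟩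
      have hEq : (nnb G N x).filter (fun a' => ¬G.Adj y a') = (nnb G N x).erase a := by
        apply eq_of_subset_of_card_le hsubA
        rw [card_erase_of_mem haA]
        exact hyA y hyB
      have h2 : 1 < ((nnb G N x).erase a).card := by
        rw [card_erase_of_mem haA]; omega
      obtain ⟨a1, h1e, a2, h2e, hne12⟩ := one_lt_card.mp h2
      have hna1 : ¬G.Adj y a1 :=
        (mem_filter.mp (show a1 ∈ _ by rw [hEq]; exact h1e)).2
      have hna2 : ¬G.Adj y a2 :=
        (mem_filter.mp (show a2 ∈ _ by rw [hEq]; exact h2e)).2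
      have ha1A := mem_of_mem_erase h1e
      have ha2A := mem_of_mem_erase h2e
      have ha1a : a1 ≠ a := (mem_erase.mp h1e).1
      have ha2a : a2 ≠ a := (mem_erase.mp h2e).1
      have haN : a ∈ N := ((mem_nnb G).mp haA).1
      have hyN : y ∈ N := ((mem_cnb G).mp hyB).1
      exact L3 a ((hvmem a).mp haN) a1 a2 y
        ((hvmem a1).mp ((mem_nnb G).mp ha1A).1) (hAadj a haA a1 ha1A ha1a.symm)
        ((hvmem a2).mp ((mem_nnb G).mp ha2A).1) (hAadj a haA a2 ha2A ha2a.symm)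
        ((hvmem y).mp hyN) hya.symm hne12 (hAB a1 ha1A y hyB) (hAB a2 ha2A y hyB)
        (fun h => hna1 h.symm) (fun h => hna2 h.symm)
  -- case C : every vertex of N has exactly two non-neighbours in N
  push_neg at caseA caseB
  have hf2 : ∀ u ∈ N, (nnb G N u).card = 2 := fun u hu =>
    le_antisymm (Nat.lt_succ_iff.mp (caseB u hu)) (caseA u hu)
  obtain ⟨u, huN⟩ := hNne
  obtain ⟨w1, w2, hw12, hnnu⟩ := card_eq_two.mp (hf2 u huN)
  have hw1 : w1 ∈ nnb G N u := by rw [hnnu]; simp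
  have hw2 : w2 ∈ nnb G N u := by rw [hnnu]; simp
  obtain ⟨hw1N, hw1u, hw1na⟩ := (mem_nnb G).mp hw1
  obtain ⟨hw2N, hw2u, hw2na⟩ := (mem_nnb G).mp hw2
  have hadj12 : G.Adj w1 w2 := by
    by_contra h
    exact claw_prop G hclaw ((hvmem u).mp huN) ((hvmem w1).mp hw1N) ((hvmem w2).mp hw2N)
      hw1u.symm hw2u.symm hw12 hw1na hw2na h
  have hω3 : 3 ≤ G.cliqueNum := by
    have hvw1 : G.Adj v w1 := (hvmem w1).mp hw1N
    have hvw2 : G.Adj v w2 := (hvmem w2).mp hw2N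
    have hclq : G.IsClique ↑({v, w1, w2} : Finset V) := by
      have : (↑({v, w1, w2} : Finset V) : Set V) = {v, w1, w2} := by simp
      rw [this, SimpleGraph.isClique_insert]
      refine ⟨?_, ?_⟩
      · rw [SimpleGraph.isClique_insert]
        refine ⟨by simp [SimpleGraph.isClique_iff, Set.pairwise_singleton], ?_⟩
        intro b hb _
        rw [Set.mem_singleton_iff] at hb
        subst hb
        exact hadj12
      · intro b hb _
        rcases Set.mem_insert_iff.mp hb with rfl | hb'
        · exact hvw1
        · rw [Set.mem_singleton_iff] at hb'; subst hb'; exact hvw2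
    have h' := hcl _ hclq
    have hc3 : ({v, w1, w2} : Finset V).card = 3 := by
      rw [card_insert_of_notMem, card_insert_of_notMem, card_singleton]
      · simp [hw12]
      · simp only [mem_insert, mem_singleton]
        push_neg
        exact ⟨hvw1.ne, hvw2.ne⟩
    omega
  have hΔ5 : G.maxDegree ≤ 5 := by
    by_contra h6
    push_neg at h6
    have hBcard : G.maxDegree - 3 ≤ (N \ {u, w1, w2}).card := by
      have h3 : ({u, w1, w2} : Finset V).card ≤ 3 :=
        card_le_three
      have := le_card_sdiff ({u, w1, w2} : Finset V) N
      omega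
    have hBprop : ∀ w ∈ N \ {u, w1, w2}, w ∈ nnb G N w1 ∪ nnb G N w2 := by
      intro w hw
      rw [mem_sdiff] at hw
      obtain ⟨hwN, hwne⟩ := hw
      simp only [mem_insert, mem_singleton] at hwne
      push_neg at hwne
      obtain ⟨hwu, hww1, hww2⟩ := hwne
      have hadjuw : G.Adj u w := by
        by_contra h
        have : w ∈ nnb G N u := (mem_nnb G).mpr ⟨hwN, hwu, h⟩
        rw [hnnu] at this
        simp only [mem_insert, mem_singleton] at this
        tauto
      by_contra hcon
      simp only [mem_union] at hcon
      push_neg at hcon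
      obtain ⟨h1, h2⟩ := hcon
      have hadj1w : G.Adj w1 w := by
        by_contra h
        exact h1 ((mem_nnb G).mpr ⟨hwN, hww1, h⟩)
      have hadj2w : G.Adj w2 w := by
        by_contra h
        exact h2 ((mem_nnb G).mpr ⟨hwN, hww2, h⟩)
      obtain ⟨z1, z2, hz12, hnnw⟩ := card_eq_two.mp (hf2 w hwN)
      have hz1 : z1 ∈ nnb G N w := by rw [hnnw]; simp
      have hz2 : z2 ∈ nnb G N w := by rw [hnnw]; simp
      obtain ⟨hz1N, hz1w, hz1na⟩ := (mem_nnb G).mp hz1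
      obtain ⟨hz2N, hz2w, hz2na⟩ := (mem_nnb G).mp hz2
      have huz1 : G.Adj u z1 := by
        by_contra h
        have hz1u : z1 ≠ u := by
          rintro rfl
          exact hz1na hadjuw.symm
        have : z1 ∈ nnb G N u := (mem_nnb G).mpr ⟨hz1N, hz1u, h⟩
        rw [hnnu] at this
        simp only [mem_insert, mem_singleton] at this
        rcases this with rfl | rfl
        · exact hz1na hadj1w.symm
        · exact hz1na hadj2w.symm
      have huz2 : G.Adj u z2 := by
        by_contra h
        have hz2u : z2 ≠ u := by
          rintro rfl
          exact hz2na hadjuw.symm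
        have : z2 ∈ nnb G N u := (mem_nnb G).mpr ⟨hz2N, hz2u, h⟩
        rw [hnnu] at this
        simp only [mem_insert, mem_singleton] at this
        rcases this with rfl | rfl
        · exact hz2na hadj1w.symm
        · exact hz2na hadj2w.symm
      exact L3 u ((hvmem u).mp huN) z1 z2 w ((hvmem z1).mp hz1N) huz1
        ((hvmem z2).mp hz2N) huz2 ((hvmem w).mp hwN) hadjuw hz12 hz1w hz2w
        (fun h => hz1na h.symm) (fun h => hz2na h.symm)
    have hu1 : u ∈ nnb G N w1 := (mem_nnb G).mpr ⟨huN, hw1u.symm, fun h => hw1na h.symm⟩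
    have hu2 : u ∈ nnb G N w2 := (mem_nnb G).mpr ⟨huN, hw2u.symm, fun h => hw2na h.symm⟩
    have hins : insert u (N \ {u, w1, w2}) ⊆ nnb G N w1 ∪ nnb G N w2 := by
      intro w hw
      rcases mem_insert.mp hw with rfl | hw'
      · exact mem_union_left _ hu1
      · exact hBprop w hw'
    have huB : u ∉ N \ {u, w1, w2} := by simp
    have hcard1 : (insert u (N \ {u, w1, w2})).card = (N \ {u, w1, w2}).card + 1 :=
      card_insert_of_notMem huB
    have hcu : 1 ≤ ((nnb G N w1) ∩ (nnb G N w2)).card :=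
      card_pos.mpr ⟨u, mem_inter.mpr ⟨hu1, hu2⟩⟩
    have hcun := card_union_add_card_inter (nnb G N w1) (nnb G N w2)
    have hcw1 : (nnb G N w1).card = 2 := hf2 w1 hw1N
    have hcw2 : (nnb G N w2).card = 2 := hf2 w2 hw2N
    have hle := card_le_card hins
    omega
  rw [hmd]
  rcases Nat.lt_or_ge G.cliqueNum 4 with hω4 | hω4
  · have hωeq : G.cliqueNum = 3 := by omega
    by_cases hΔeq : G.maxDegree = 5
    · exact ⟨by omega, Or.inl ⟨by omega, hΔeq, hωeq⟩⟩
    · exact ⟨by omega, Or.inr (by omega)⟩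
  · exact ⟨by omega, Or.inr (by omega)⟩
end

section
/- For n > 1 and m ≥ 1, let G be obtained from the odd cycle C_{2n+1} with vertices u_1,…,u_{2n+1} by replacing each odd-indexed vertex u_1, u_3, …, u_{2n−1} with a clique K_m (each clique's vertices adjacent to all neighbors of the replaced vertex). Then G is K_{1,3}-free and ((K_2 ∪ K_1) + K_2)-free, ω(G) = m + 1, Δ(G) = 2m = 2ω(G) − 2, and χ(G) = m + 2 = ω(G) + 1. -/
open SimpleGraph Finset

/-- The graph obtained from the cycle `C_{2n+1}` with vertices `u_1, …, u_{2n+1}`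
(here indexed by `i : Fin (2n+1)` representing `u_{i+1}`) by replacing each odd-indexed
vertex `u_1, u_3, …, u_{2n-1}` by a clique `K_m`: a vertex is a pair `⟨i, a⟩` where `a`
ranges over the `m` copies (or the single copy); two vertices are adjacent iff they are
distinct copies at the same cycle position, or lie at consecutive cycle positions. -/
def cycleBlowup (n m : ℕ) :
    SimpleGraph (Σ i : Fin (2 * n + 1), Fin (if i.val % 2 = 0 ∧ i.val < 2 * n then m else 1)) :=
  SimpleGraph.fromRel (fun x y => x.1 = y.1 ∨ y.1.val = (x.1.val + 1) % (2 * n + 1))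

abbrev BV (n m : ℕ) := Σ i : Fin (2 * n + 1), Fin (if i.val % 2 = 0 ∧ i.val < 2 * n then m else 1)

/-- positions adjacent-or-equal in the cycle, in `val` form -/
def PA (n a b : ℕ) : Prop :=
  a = b ∨ b = a+1 ∨ a = b+1 ∨ (a = 2*n ∧ b = 0) ∨ (b = 2*n ∧ a = 0)

lemma mod_succ (n a : ℕ) (ha : a < 2*n+1) :
    (a+1) % (2*n+1) = if a = 2*n then 0 else a+1 := by
  split_ifs with h
  · subst h; simp
  · exact Nat.mod_eq_of_lt (by omega)

lemma pa_lin (n a b : ℕ) (ha : a < 2*n+1) (hb : b < 2*n+1) :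
    (a = b ∨ b = (a+1)%(2*n+1) ∨ a = (b+1)%(2*n+1)) ↔ PA n a b := by
  rw [mod_succ n a ha, mod_succ n b hb, PA]
  split_ifs <;> omega

lemma adj_iff (n m : ℕ) (x y : BV n m) :
    (cycleBlowup n m).Adj x y ↔ x ≠ y ∧ PA n x.1.val y.1.val := by
  rw [cycleBlowup, fromRel_adj, ← pa_lin n _ _ x.1.isLt y.1.isLt]
  simp only [Fin.ext_iff]
  constructor
  · rintro ⟨h1, h2⟩; exact ⟨h1, by tauto⟩
  · rintro ⟨h1, h2⟩; exact ⟨h1, by tauto⟩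

lemma two_at_pos {n m : ℕ} {x y : BV n m} (h : x.1 = y.1) (hne : x ≠ y) :
    x.1.val % 2 = 0 ∧ x.1.val < 2*n ∧ 2 ≤ m := by
  obtain ⟨i, a⟩ := x; obtain ⟨j, b⟩ := y
  simp only at h
  subst h
  have hab : a ≠ b := fun hh => hne (by rw [hh])
  have ha := a.isLt; have hb := b.isLt
  have hv : a.val ≠ b.val := fun hh => hab (Fin.ext hh)
  by_cases hc : i.val % 2 = 0 ∧ i.val < 2*n
  · have hs : (if i.val % 2 = 0 ∧ i.val < 2*n then m else 1) = m := if_pos hc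
    exact ⟨hc.1, hc.2, by omega⟩
  · have hs : (if i.val % 2 = 0 ∧ i.val < 2*n then m else 1) = 1 := if_neg hc
    omega

/-- three pairwise distinct, pairwise position-adjacent values are impossible -/
lemma no_three (n a b c : ℕ) (hn : 1 < n) (ha : a < 2*n+1) (hb : b < 2*n+1) (hc : c < 2*n+1)
    (pab : PA n a b) (pac : PA n a c) (pbc : PA n b c)
    (nab : a ≠ b) (nac : a ≠ c) (nbc : b ≠ c) : False := by
  unfold PA at *
  rcases pab with h1|h1|h1|⟨h1,h1'⟩|⟨h1,h1'⟩ <;>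
    rcases pac with h2|h2|h2|⟨h2,h2'⟩|⟨h2,h2'⟩ <;> omega

lemma claw_core (n p q1 q2 q3 : ℕ) (hn : 1 < n)
    (bp : p < 2*n+1) (b1 : q1 < 2*n+1) (b2 : q2 < 2*n+1) (b3 : q3 < 2*n+1)
    (h1 : PA n p q1) (h2 : PA n p q2) (h3 : PA n p q3)
    (g1 : ¬ PA n q1 q2) (g2 : ¬ PA n q1 q3) (g3 : ¬ PA n q2 q3) : False := by
  unfold PA at *
  rcases h1 with h1|h1|h1|⟨h1,h1'⟩|⟨h1,h1'⟩ <;>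
    rcases h2 with h2|h2|h2|⟨h2,h2'⟩|⟨h2,h2'⟩ <;>
      rcases h3 with h3|h3|h3|⟨h3,h3'⟩|⟨h3,h3'⟩ <;> omega

lemma pa_ne_of (n a b c : ℕ) (h : ¬ PA n a b) (h2 : PA n a c) : c ≠ b := by
  unfold PA at *; omega

lemma par_core (n a b : ℕ) (h : PA n a b) (nab : a ≠ b)
    (ea : a % 2 = 0) (la : a < 2*n) (eb : b % 2 = 0) (lb : b < 2*n) : False := by
  unfold PA at h; omega

set_option maxHeartbeats 1000000 in
lemma clawfree (n m : ℕ) (hn : 1 < n) : _root_.Free claw (cycleBlowup n m) := by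
  constructor
  intro e
  have key : ∀ i : Fin 3, (cycleBlowup n m).Adj (e (Sum.inl 0)) (e (Sum.inr i)) := fun i =>
    e.map_rel_iff.mpr (by simp [claw, completeBipartiteGraph])
  have key2 : ∀ i j : Fin 3, i ≠ j →
      ¬ (cycleBlowup n m).Adj (e (Sum.inr i)) (e (Sum.inr j)) := by
    intro i j hij h
    have := e.map_rel_iff.mp h
    simp [claw, completeBipartiteGraph] at this
  have inj : ∀ i j : Fin 3, i ≠ j → e (Sum.inr i) ≠ e (Sum.inr j) := fun i j hij h =>
    hij (Sum.inr.inj (e.injective h))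
  have pa : ∀ i : Fin 3, PA n (e (Sum.inl 0)).1.val (e (Sum.inr i)).1.val :=
    fun i => ((adj_iff n m _ _).mp (key i)).2
  have npa : ∀ i j : Fin 3, i ≠ j → ¬ PA n (e (Sum.inr i)).1.val (e (Sum.inr j)).1.val :=
    fun i j hij h => key2 i j hij ((adj_iff n m _ _).mpr ⟨inj i j hij, h⟩)
  exact claw_core n _ _ _ _ hn (e (Sum.inl 0)).1.isLt (e (Sum.inr 0)).1.isLt
    (e (Sum.inr 1)).1.isLt (e (Sum.inr 2)).1.isLt (pa 0) (pa 1) (pa 2)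
    (npa 0 1 (by decide)) (npa 0 2 (by decide)) (npa 1 2 (by decide))

set_option maxHeartbeats 1000000 in
lemma kkfree (n m : ℕ) (hn : 1 < n) : _root_.Free kkJoin (cycleBlowup n m) := by
  constructor
  intro e
  have pa : ∀ i j : Fin 5, kkJoin.Adj i j → PA n (e i).1.val (e j).1.val :=
    fun i j h => ((adj_iff n m _ _).mp (e.map_rel_iff.mpr h)).2
  have npa : ∀ i j : Fin 5, i ≠ j → ¬ kkJoin.Adj i j → ¬ PA n (e i).1.val (e j).1.val :=
    fun i j hij hn2 h => hn2 (e.map_rel_iff.mp ((adj_iff n m _ _).mpr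
      ⟨fun hh => hij (e.injective hh), h⟩))
  have p01 := pa 0 1 (by rw [kkJoin, fromEdgeSet_adj]; simp)
  have p03 := pa 0 3 (by rw [kkJoin, fromEdgeSet_adj]; simp)
  have p04 := pa 0 4 (by rw [kkJoin, fromEdgeSet_adj]; simp)
  have p13 := pa 1 3 (by rw [kkJoin, fromEdgeSet_adj]; simp)
  have p34 := pa 3 4 (by rw [kkJoin, fromEdgeSet_adj]; simp)
  have p23 := pa 2 3 (by rw [kkJoin, fromEdgeSet_adj]; simp)
  have p24 := pa 2 4 (by rw [kkJoin, fromEdgeSet_adj]; simp)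
  have q20 := npa 2 0 (by decide) (by rw [kkJoin, fromEdgeSet_adj]; simp)
  have q21 := npa 2 1 (by decide) (by rw [kkJoin, fromEdgeSet_adj]; simp)
  have ne30 := pa_ne_of n _ _ _ q20 p23
  have ne31 := pa_ne_of n _ _ _ q21 p23
  have ne40 := pa_ne_of n _ _ _ q20 p24
  have h01 : (e 0).1.val = (e 1).1.val := by
    by_contra hne
    exact no_three n _ _ _ hn (e 0).1.isLt (e 1).1.isLt (e 3).1.isLt
      p01 p03 p13 hne ne30.symm ne31.symm
  have h34 : (e 3).1.val = (e 4).1.val := by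
    by_contra hne
    exact no_three n _ _ _ hn (e 0).1.isLt (e 3).1.isLt (e 4).1.isLt
      p03 p04 p34 ne30.symm ne40.symm hne
  have c0 := two_at_pos (x := e 0) (y := e 1) (Fin.ext h01)
    (fun hh => (by decide : (0:Fin 5) ≠ 1) (e.injective hh))
  have c3 := two_at_pos (x := e 3) (y := e 4) (Fin.ext h34)
    (fun hh => (by decide : (3:Fin 5) ≠ 4) (e.injective hh))
  exact par_core n _ _ p03 ne30.symm c0.1 c0.2.1 c3.1 c3.2.1

def szn (n m a : ℕ) : ℕ := if a % 2 = 0 ∧ a < 2*n then m else 1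

lemma card_fiber (n m : ℕ) (i : Fin (2*n+1)) :
    (univ : Finset (Fin (if i.val % 2 = 0 ∧ i.val < 2 * n then m else 1))).card = szn n m i.val := by
  simp [szn]

lemma card_le_of_posSubset {n m : ℕ} (t : Finset (BV n m)) (S : Finset (Fin (2*n+1)))
    (h : ∀ x ∈ t, x.1 ∈ S) : t.card ≤ ∑ i ∈ S, szn n m i.val := by
  calc t.card ≤ (S.sigma (fun i => (univ : Finset (Fin _)))).card :=
        card_le_card (fun x hx => mem_sigma.mpr ⟨h x hx, mem_univ _⟩)
    _ = ∑ i ∈ S, szn n m i.val := by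
        rw [card_sigma]; exact sum_congr rfl fun i _ => card_fiber n m i

lemma szn_le {n m : ℕ} (hm : 1 ≤ m) (a : ℕ) : szn n m a ≤ m := by
  unfold szn; split_ifs <;> omega

lemma szn_pair {n m : ℕ} (hm : 1 ≤ m) {a b : ℕ} (hp : PA n a b) (hab : a ≠ b)
    (ha : a < 2*n+1) (hb : b < 2*n+1) : szn n m a + szn n m b ≤ m + 1 := by
  unfold szn PA at *; split_ifs <;> omega

lemma clique_bound {n m : ℕ} (hn : 1 < n) (hm : 1 ≤ m) (t : Finset (BV n m))
    (hc : (cycleBlowup n m).IsClique t) : t.card ≤ m + 1 := by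
  rcases t.eq_empty_or_nonempty with rfl | ⟨x, hx⟩
  · simp
  by_cases hall : ∀ y ∈ t, y.1 = x.1
  · have := card_le_of_posSubset t {x.1} (fun y hy => by rw [mem_singleton]; exact hall y hy)
    rw [sum_singleton] at this
    exact this.trans (by have := szn_le (n := n) hm x.1.val; omega)
  · push_neg at hall
    obtain ⟨y, hy, hyx⟩ := hall
    have nxy : x.1.val ≠ y.1.val := fun h => hyx (Fin.ext h.symm)
    have hadj : ∀ a ∈ t, ∀ b ∈ t, a.1 ≠ b.1 → PA n a.1.val b.1.val := by
      intro a ha b hb hab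
      exact ((adj_iff n m a b).mp (hc ha hb (fun hh => hab (by rw [hh])))).2
    have pxy := hadj x hx y hy (fun h => nxy (congrArg Fin.val h))
    have hsub : ∀ z ∈ t, z.1 ∈ ({x.1, y.1} : Finset (Fin (2*n+1))) := by
      intro z hz
      rw [mem_insert, mem_singleton]
      by_contra hcon
      push_neg at hcon
      have nzx : z.1.val ≠ x.1.val := fun h => hcon.1 (Fin.ext h)
      have nzy : z.1.val ≠ y.1.val := fun h => hcon.2 (Fin.ext h)
      exact no_three n _ _ _ hn x.1.isLt y.1.isLt z.1.isLt
        pxy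
        (hadj x hx z hz (fun h => nzx (congrArg Fin.val h).symm))
        (hadj y hy z hz (fun h => nzy (congrArg Fin.val h).symm))
        nxy (Ne.symm nzx) (Ne.symm nzy)
    have hcard := card_le_of_posSubset t {x.1, y.1} hsub
    rw [sum_pair (fun h => hyx h.symm)] at hcard
    have := szn_pair (n := n) hm pxy nxy x.1.isLt y.1.isLt
    omega

lemma big_clique (n m : ℕ) (hn : 1 < n) (hm : 1 ≤ m) :
    (cycleBlowup n m).IsNClique (m+1)
      ((({⟨0, by omega⟩, ⟨1, by omega⟩} : Finset (Fin (2*n+1))).sigma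
        (fun i => (univ : Finset (Fin (if i.val % 2 = 0 ∧ i.val < 2 * n then m else 1)))))) := by
  constructor
  · intro a ha b hb hab
    rw [mem_coe, mem_sigma, mem_insert, mem_singleton] at ha hb
    rw [adj_iff]
    refine ⟨hab, ?_⟩
    have h1 : a.1.val = 0 ∨ a.1.val = 1 := by
      rcases ha.1 with h | h <;> [left; right] <;> rw [h]
    have h2 : b.1.val = 0 ∨ b.1.val = 1 := by
      rcases hb.1 with h | h <;> [left; right] <;> rw [h]
    unfold PA; omega
  · rw [card_sigma, sum_pair (by simp [Fin.ext_iff]), card_fiber, card_fiber]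
    show szn n m 0 + szn n m 1 = m + 1
    unfold szn
    rw [if_pos (by omega : (0:ℕ) % 2 = 0 ∧ 0 < 2*n), if_neg (by omega : ¬((1:ℕ) % 2 = 0 ∧ 1 < 2*n))]

lemma cliqueNum_bb (n m : ℕ) (hn : 1 < n) (hm : 1 ≤ m) :
    (cycleBlowup n m).cliqueNum = m + 1 := by
  have hbdd : BddAbove {k | ∃ s, (cycleBlowup n m).IsNClique k s} := by
    refine ⟨Fintype.card (BV n m), fun k hk => ?_⟩
    obtain ⟨s, hs⟩ := hk
    rw [← hs.2]
    exact s.card_le_univ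
  unfold SimpleGraph.cliqueNum
  apply le_antisymm
  · apply csSup_le
    · exact ⟨0, ∅, isNClique_empty.mpr rfl⟩
    rintro k ⟨s, hs⟩
    rw [← hs.2]
    exact clique_bound hn hm s hs.1
  · exact le_csSup hbdd ⟨_, big_clique n m hn hm⟩

lemma fiber_one {n m : ℕ} {x y : BV n m} (h : x.1 = y.1)
    (h1 : ¬(x.1.val % 2 = 0 ∧ x.1.val < 2*n)) : x = y := by
  obtain ⟨i, a⟩ := x; obtain ⟨j, b⟩ := y
  simp only at h h1
  subst h
  have ha := a.isLt; have hb := b.isLt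
  have hs : (if i.val % 2 = 0 ∧ i.val < 2*n then m else 1) = 1 := if_neg h1
  have : a = b := Fin.ext (by omega)
  rw [this]

lemma szn_three (n m p : ℕ) (hm : 1 ≤ m) (hn : 1 < n) (hp : p < 2*n+1) :
    szn n m (if p = 0 then 2*n else p-1) + szn n m p
      + szn n m (if p = 2*n then 0 else p+1) ≤ 2*m+1 := by
  unfold szn; split_ifs <;> omega

lemma pa_mem_three (n p : ℕ) (hn : 1 < n) (hp : p < 2*n+1) (q : ℕ) (hq : q < 2*n+1)
    (h : PA n p q) :
    q = (if p = 0 then 2*n else p-1) ∨ q = p ∨ q = (if p = 2*n then 0 else p+1) := by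
  unfold PA at h; split_ifs <;> omega

lemma degree_le_bb (n m : ℕ) (hn : 1 < n) (hm : 1 ≤ m)
    [inst : DecidableRel (cycleBlowup n m).Adj] (v : BV n m) :
    (cycleBlowup n m).degree v ≤ 2*m := by
  classical
  set p := v.1.val with hp
  have hpl : p < 2*n+1 := v.1.isLt
  set a : Fin (2*n+1) := ⟨if p = 0 then 2*n else p-1, by split_ifs <;> omega⟩ with ha
  set c : Fin (2*n+1) := ⟨if p = 2*n then 0 else p+1, by split_ifs <;> omega⟩ with hc
  have hav : a ≠ v.1 := by
    intro h
    have hv : (if p = 0 then 2*n else p-1) = p := congrArg Fin.val h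
    split_ifs at hv <;> omega
  have hvc : v.1 ≠ c := by
    intro h
    have hv : p = (if p = 2*n then 0 else p+1) := congrArg Fin.val h
    split_ifs at hv <;> omega
  have hac : a ≠ c := by
    intro h
    have hv : (if p = 0 then 2*n else p-1) = (if p = 2*n then 0 else p+1) := congrArg Fin.val h
    split_ifs at hv <;> omega
  have hsub : (cycleBlowup n m).neighborFinset v ⊆
      ((({a, v.1, c} : Finset (Fin (2*n+1))).sigma
        (fun i => (univ : Finset (Fin (if i.val % 2 = 0 ∧ i.val < 2 * n then m else 1))))).erase v) := by
    intro x hx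
    rw [mem_neighborFinset] at hx
    obtain ⟨hne, hpa⟩ := (adj_iff n m v x).mp hx
    rw [mem_erase]
    refine ⟨fun h => hne h.symm, mem_sigma.mpr ⟨?_, mem_univ _⟩⟩
    rw [mem_insert, mem_insert, mem_singleton]
    rcases pa_mem_three n p hn hpl x.1.val x.1.isLt hpa with h | h | h
    · exact Or.inl (Fin.ext h)
    · exact Or.inr (Or.inl (Fin.ext h))
    · exact Or.inr (Or.inr (Fin.ext h))
  have hvmem : v ∈ (({a, v.1, c} : Finset (Fin (2*n+1))).sigma
      (fun i => (univ : Finset (Fin (if i.val % 2 = 0 ∧ i.val < 2 * n then m else 1))))) :=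
    mem_sigma.mpr ⟨by rw [mem_insert, mem_insert]; exact Or.inr (Or.inl rfl), mem_univ _⟩
  have h1 := card_le_card hsub
  rw [card_erase_of_mem hvmem] at h1
  have h2 : (({a, v.1, c} : Finset (Fin (2*n+1))).sigma
      (fun i => (univ : Finset (Fin (if i.val % 2 = 0 ∧ i.val < 2 * n then m else 1))))).card ≤ 2*m+1 := by
    rw [card_sigma]
    have hs1 : ∑ i ∈ ({a, v.1, c} : Finset (Fin (2*n+1))), (univ : Finset (Fin _)).card
        = ∑ i ∈ ({a, v.1, c} : Finset (Fin (2*n+1))), szn n m i.val :=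
      sum_congr rfl fun i _ => card_fiber n m i
    rw [hs1, sum_insert (by rw [mem_insert, mem_singleton]; tauto), sum_pair hvc]
    have h3 : szn n m a.val + (szn n m v.1.val + szn n m c.val) ≤ 2*m+1 := by
      show szn n m (if p = 0 then 2*n else p-1)
        + (szn n m p + szn n m (if p = 2*n then 0 else p+1)) ≤ 2*m+1
      have := szn_three n m p hm hn hpl
      omega
    exact h3
  unfold SimpleGraph.degree
  omega

lemma degree_w (n m : ℕ) (hn : 1 < n) (hm : 1 ≤ m)
    [inst : DecidableRel (cycleBlowup n m).Adj] :
    (cycleBlowup n m).degree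
      (⟨⟨1, by omega⟩, ⟨0, by split_ifs <;> omega⟩⟩ : BV n m) = 2*m := by
  classical
  set w : BV n m := ⟨⟨1, by omega⟩, ⟨0, by split_ifs <;> omega⟩⟩ with hw
  have hkey : (cycleBlowup n m).neighborFinset w =
      (({⟨0, by omega⟩, ⟨2, by omega⟩} : Finset (Fin (2*n+1))).sigma
        (fun i => (univ : Finset (Fin (if i.val % 2 = 0 ∧ i.val < 2 * n then m else 1))))) := by
    ext x
    rw [mem_neighborFinset, mem_sigma, mem_insert, mem_singleton, adj_iff]
    constructor
    · rintro ⟨hne, hpa⟩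
      refine ⟨?_, mem_univ _⟩
      have hw1 : w.1.val = 1 := rfl
      rw [hw1] at hpa
      have hx := x.1.isLt
      have hx1 : x.1.val ≠ 1 := by
        intro h
        exact hne (fiber_one (x := w) (y := x) (Fin.ext (by rw [hw1, h]))
          (by rw [hw1]; omega))
      have : x.1.val = 0 ∨ x.1.val = 2 := by unfold PA at hpa; omega
      rcases this with h | h
      · exact Or.inl (Fin.ext h)
      · exact Or.inr (Fin.ext h)
    · rintro ⟨hx, -⟩
      have hw1 : w.1.val = 1 := rfl
      have hv : x.1.val = 0 ∨ x.1.val = 2 := by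
        rcases hx with h | h <;> [left; right] <;> rw [h]
      constructor
      · intro h
        rw [h] at hw1
        omega
      · rw [hw1]; unfold PA; omega
  rw [SimpleGraph.degree, hkey, card_sigma, sum_pair (by simp [Fin.ext_iff]),
    card_fiber, card_fiber]
  show szn n m 0 + szn n m 2 = 2*m
  unfold szn
  rw [if_pos (by omega : (0:ℕ) % 2 = 0 ∧ 0 < 2*n), if_pos (by omega : (2:ℕ) % 2 = 0 ∧ 2 < 2*n)]
  omega

lemma maxDegree_bb (n m : ℕ) (hn : 1 < n) (hm : 1 ≤ m)
    [inst : DecidableRel (cycleBlowup n m).Adj] :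
    (cycleBlowup n m).maxDegree = 2*m := by
  apply le_antisymm
  · exact maxDegree_le_of_forall_degree_le _ _ (degree_le_bb n m hn hm)
  · rw [← degree_w n m hn hm]
    exact degree_le_maxDegree _ _

lemma vert_ext {n m : ℕ} {x y : BV n m} (h1 : x.1 = y.1) (h2 : x.2.val = y.2.val) : x = y := by
  obtain ⟨i, a⟩ := x; obtain ⟨j, b⟩ := y
  simp only at h1 h2
  subst h1
  rw [Fin.ext h2]

def colFun (n m : ℕ) (hm : 1 ≤ m) (x : BV n m) : Fin (m+2) :=
  if x.1.val = 2*n then ⟨m+1, by omega⟩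
  else if x.1.val % 2 = 0 then
    ⟨x.2.val, by
      have h1 : x.2.val < szn n m x.1.val := x.2.isLt
      have h2 := szn_le (n := n) hm x.1.val
      omega⟩
  else ⟨m, by omega⟩

lemma colFun_val (n m : ℕ) (hm : 1 ≤ m) (x : BV n m) :
    (colFun n m hm x).val =
      if x.1.val = 2*n then m+1 else if x.1.val % 2 = 0 then x.2.val else m := by
  unfold colFun
  split_ifs <;> rfl

lemma col_proper (n m : ℕ) (hn : 1 < n) (hm : 1 ≤ m) {x y : BV n m}
    (h : (cycleBlowup n m).Adj x y) : colFun n m hm x ≠ colFun n m hm y := by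
  obtain ⟨hne, hpa⟩ := (adj_iff n m x y).mp h
  intro hcol
  have hval := congrArg Fin.val hcol
  rw [colFun_val, colFun_val] at hval
  obtain ⟨xs, hxs⟩ : ∃ v, (x.2 : ℕ) = v := ⟨_, rfl⟩
  obtain ⟨ys, hys⟩ : ∃ v, (y.2 : ℕ) = v := ⟨_, rfl⟩
  rw [hxs, hys] at hval
  have hxb := x.1.isLt
  have hyb := y.1.isLt
  have hxm : x.1.val % 2 = 0 ∧ x.1.val < 2*n → xs < m := by
    intro hc
    have h1 : x.2.val < szn n m x.1.val := x.2.isLt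
    have h2 : szn n m x.1.val = m := if_pos hc
    omega
  have hym : y.1.val % 2 = 0 ∧ y.1.val < 2*n → ys < m := by
    intro hc
    have h1 : y.2.val < szn n m y.1.val := y.2.isLt
    have h2 : szn n m y.1.val = m := if_pos hc
    omega
  by_cases heq : x.1.val = y.1.val
  · have hcond := two_at_pos (x := x) (y := y) (Fin.ext heq) hne
    have hsnd : xs ≠ ys := fun h2 => hne (vert_ext (Fin.ext heq) (by rw [hxs, hys]; exact h2))
    split_ifs at hval <;> omega
  · unfold PA at hpa
    split_ifs at hval <;> omega

lemma pa_of_succ (n a b : ℕ) (ha : a < 2*n+1) (h : b = (a+1) % (2*n+1)) : PA n a b := by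
  rw [mod_succ n a ha] at h
  unfold PA
  split_ifs at h <;> omega

lemma indep_le (n m : ℕ) (hn : 1 < n) (t : Finset (BV n m))
    (h : ∀ x ∈ t, ∀ y ∈ t, x ≠ y → ¬(cycleBlowup n m).Adj x y) : t.card ≤ n := by
  classical
  set P := t.image (fun x => x.1) with hP
  have hinj : Set.InjOn (fun x : BV n m => x.1) t := by
    intro x hx y hy hxy
    by_contra hne
    exact h x hx y hy hne ((adj_iff n m x y).mpr ⟨hne, Or.inl (congrArg Fin.val hxy)⟩)
  have hcardP : P.card = t.card := card_image_of_injOn hinj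
  set f : Fin (2*n+1) → Fin (2*n+1) :=
    fun i => ⟨(i.val+1) % (2*n+1), Nat.mod_lt _ (by omega)⟩ with hf
  have hfinj : Function.Injective f := by
    intro a b hab
    have hv : (a.val+1) % (2*n+1) = (b.val+1) % (2*n+1) := congrArg Fin.val hab
    rw [mod_succ n _ a.isLt, mod_succ n _ b.isLt] at hv
    apply Fin.ext
    split_ifs at hv <;> omega
  have hdisj : Disjoint P (P.image f) := by
    rw [Finset.disjoint_left]
    intro q hq hq'
    obtain ⟨x, hx, hx1⟩ := mem_image.mp hq
    obtain ⟨i, hi, hi1⟩ := mem_image.mp hq'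
    obtain ⟨y, hy, hy1⟩ := mem_image.mp hi
    -- x.1 = q, f y.1 = q
    have hqv : x.1.val = (y.1.val + 1) % (2*n+1) := by
      rw [hx1, ← hi1, ← hy1]
    have hpa : PA n y.1.val x.1.val := pa_of_succ n _ _ y.1.isLt hqv
    have hxy : y ≠ x := by
      intro hh
      rw [hh] at hqv
      rw [mod_succ n _ x.1.isLt] at hqv
      split_ifs at hqv <;> omega
    exact h y hy x hx hxy ((adj_iff n m y x).mpr ⟨hxy, hpa⟩)
  have hcard2 : (P ∪ P.image f).card = 2 * P.card := by
    rw [card_union_of_disjoint hdisj, card_image_of_injective _ hfinj]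
    omega
  have hle : (P ∪ P.image f).card ≤ 2*n+1 := by
    have := card_le_univ (P ∪ P.image f)
    simpa using this
  omega

lemma sum_even_odd (m k : ℕ) :
    ∑ i ∈ Finset.range (2*k), (if i % 2 = 0 then m else 1) = k*(m+1) := by
  induction k with
  | zero => simp
  | succ k ih =>
    rw [show 2*(k+1) = (2*k+1)+1 by omega, sum_range_succ, sum_range_succ, ih]
    rw [if_pos (by omega), if_neg (by omega)]
    ring

lemma card_BV (n m : ℕ) : Fintype.card (BV n m) = n*m + n + 1 := by
  classical
  rw [Fintype.card_sigma]
  have h1 : ∀ i : Fin (2*n+1),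
      Fintype.card (Fin (if i.val % 2 = 0 ∧ i.val < 2 * n then m else 1)) = szn n m i.val :=
    fun i => by simp [szn]
  rw [Finset.sum_congr rfl (fun i _ => h1 i)]
  rw [Fin.sum_univ_eq_sum_range (fun i => szn n m i) (2*n+1)]
  rw [sum_range_succ]
  have h2 : szn n m (2*n) = 1 := by unfold szn; rw [if_neg (by omega)]
  have h3 : ∑ i ∈ Finset.range (2*n), szn n m i
      = ∑ i ∈ Finset.range (2*n), (if i % 2 = 0 then m else 1) := by
    apply sum_congr rfl
    intro i hi
    rw [mem_range] at hi
    unfold szn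
    by_cases hie : i % 2 = 0
    · rw [if_pos ⟨hie, hi⟩, if_pos hie]
    · rw [if_neg (by tauto), if_neg hie]
  rw [h2, h3, sum_even_odd]
  ring

lemma not_colorable_bb (n m : ℕ) (hn : 1 < n) (hm : 1 ≤ m) :
    ¬ (cycleBlowup n m).Colorable (m+1) := by
  rintro ⟨C⟩
  classical
  have hcard := Finset.card_eq_sum_card_fiberwise
    (s := (univ : Finset (BV n m))) (t := (univ : Finset (Fin (m+1)))) (f := C)
    (fun x _ => mem_univ _)
  have hfib : ∀ c : Fin (m+1), (univ.filter (fun x => C x = c)).card ≤ n := by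
    intro c
    apply indep_le n m hn
    intro x hx y hy hne hadj
    exact (C.valid hadj) (by rw [(mem_filter.mp hx).2, (mem_filter.mp hy).2])
  have hle : (univ : Finset (BV n m)).card ≤ (m+1) * n := by
    rw [hcard]
    calc ∑ c ∈ (univ : Finset (Fin (m+1))), (univ.filter (fun x => C x = c)).card
        ≤ ∑ _c ∈ (univ : Finset (Fin (m+1))), n := sum_le_sum (fun c _ => hfib c)
      _ = (m+1) * n := by rw [sum_const, card_univ, Fintype.card_fin, smul_eq_mul]
  rw [Finset.card_univ, card_BV] at hle
  rw [show (m+1)*n = n*m+n from by ring] at hle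
  omega

lemma colorable_bb (n m : ℕ) (hn : 1 < n) (hm : 1 ≤ m) :
    (cycleBlowup n m).Colorable (m+2) :=
  ⟨SimpleGraph.Coloring.mk (colFun n m hm) (fun hadj => col_proper n m hn hm hadj)⟩

lemma chrom_bb (n m : ℕ) (hn : 1 < n) (hm : 1 ≤ m) :
    (cycleBlowup n m).chromaticNumber = (m + 2 : ℕ∞) := by
  apply le_antisymm
  · have h := (colorable_bb n m hn hm).chromaticNumber_le
    have : ((m+2 : ℕ) : ℕ∞) = (m + 2 : ℕ∞) := by push_cast; ring
    rwa [this] at h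
  · have h2 : ¬ (cycleBlowup n m).chromaticNumber ≤ ((m+1 : ℕ) : ℕ∞) := fun h =>
      not_colorable_bb n m hn hm (chromaticNumber_le_iff_colorable.mp h)
    rw [not_le] at h2
    have h3 := Order.add_one_le_of_lt h2
    have : ((m+1 : ℕ) : ℕ∞) + 1 = (m + 2 : ℕ∞) := by push_cast; ring
    rwa [this] at h3

theorem stmt_6 (n m : ℕ) (hn : 1 < n) (hm : 1 ≤ m) :
    _root_.Free claw (cycleBlowup n m) ∧ _root_.Free kkJoin (cycleBlowup n m) ∧
    (cycleBlowup n m).cliqueNum = m + 1 ∧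
    maxDeg (cycleBlowup n m) = 2 * m ∧
    maxDeg (cycleBlowup n m) = 2 * (cycleBlowup n m).cliqueNum - 2 ∧
    (cycleBlowup n m).chromaticNumber = (m + 2 : ℕ∞) ∧
    (cycleBlowup n m).chromaticNumber = ((cycleBlowup n m).cliqueNum : ℕ∞) + 1 := by
  have hom := cliqueNum_bb n m hn hm
  have hch := chrom_bb n m hn hm
  have hmd : maxDeg (cycleBlowup n m) = 2*m := by
    classical
    unfold maxDeg
    exact maxDegree_bb n m hn hm
  refine ⟨clawfree n m hn, kkfree n m hn, hom, hmd, ?_, hch, ?_⟩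
  · rw [hmd, hom]
    omega
  · rw [hch, hom]
    push_cast
    ring
end

section
/- Let G be a finite simple K_{1,3}-free graph, u a vertex, Q a maximum clique of the induced subgraph on N(u), and R = N(u) \ Q. If x, y ∈ R are nonadjacent, z, w ∈ Q with xz ∉ E(G) and yw ∉ E(G), then z ≠ w, xw ∈ E(G), and yz ∈ E(G). -/
open SimpleGraph

/-- A center `u` with three pairwise nonadjacent neighbors gives a claw embedding. -/
noncomputable def claw_emb {V : Type*} (G : SimpleGraph V) (u a b c : V)
    (hua : G.Adj u a) (hub : G.Adj u b) (huc : G.Adj u c)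
    (hab : ¬ G.Adj a b) (hac : ¬ G.Adj a c) (hbc : ¬ G.Adj b c)
    (nab : a ≠ b) (nac : a ≠ c) (nbc : b ≠ c) : claw ↪g G := by
  have na := hua.ne
  have nb := hub.ne
  have nc := huc.ne
  refine ⟨⟨fun v => Sum.elim (fun _ => u) (fun (i : Fin 3) => ![a,b,c] i) v, ?_⟩, ?_⟩
  swap
  · rintro (i|i) (j|j) <;> rw [Function.Embedding.coeFn_mk] <;>
      [skip; fin_cases j; fin_cases i; (fin_cases i <;> fin_cases j)] <;>
      simp_all [claw, completeBipartiteGraph, G.adj_comm, Fin.eq_zero]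
  · rintro (i|i) (j|j) h
    · simp [Fin.eq_zero i, Fin.eq_zero j]
    · fin_cases j <;> simp_all
    · fin_cases i <;> simp_all
    · fin_cases i <;> fin_cases j <;> simp_all

theorem stmt_7 {V : Type*} [Fintype V] (G : SimpleGraph V)
    (hclaw : _root_.Free claw G) (u : V)
    (Q : Finset V) (hQclique : G.IsClique ↑Q) (hQsub : ↑Q ⊆ G.neighborSet u)
    (hQmax : ∀ Q' : Finset V, G.IsClique ↑Q' → ↑Q' ⊆ G.neighborSet u → Q'.card ≤ Q.card)
    (R : Set V) (hR : R = G.neighborSet u \ ↑Q)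
    (x y : V) (hx : x ∈ R) (hy : y ∈ R) (hxy : ¬ G.Adj x y) (hxyne : x ≠ y)
    (z w : V) (hz : z ∈ Q) (hw : w ∈ Q) (hxz : ¬ G.Adj x z) (hyw : ¬ G.Adj y w) :
    z ≠ w ∧ G.Adj x w ∧ G.Adj y z := by
  subst hR
  obtain ⟨hux, hxQ⟩ := hx
  obtain ⟨huy, hyQ⟩ := hy
  have huz : G.Adj u z := hQsub hz
  have huw : G.Adj u w := hQsub hw
  have hxz' : x ≠ z := fun h => hxQ (h ▸ hz)
  have hyz' : y ≠ z := fun h => hyQ (h ▸ hz)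
  have hxw' : x ≠ w := fun h => hxQ (h ▸ hw)
  have hyw' : y ≠ w := fun h => hyQ (h ▸ hw)
  refine ⟨?_, ?_, ?_⟩
  · rintro rfl
    exact hclaw.false (claw_emb G u x y z hux huy huz hxy hxz hyw hxyne hxz' hyz')
  · by_contra hxw
    exact hclaw.false (claw_emb G u x y w hux huy huw hxy hxw hyw hxyne hxw' hyw')
  · by_contra hyz
    exact hclaw.false (claw_emb G u x y z hux huy huz hxy hxz hyz hxyne hxz' hyz')
end

section
/- Let G be a finite simple graph that is K_{1,3}-free and ((K_2 ∪ K_1) + K_2)-free, u a vertex, Q a maximum clique in the induced subgraph on N(u), and R = N(u) \ Q. If |R| = 1 with R = {r}, then either r is nonadjacent to all vertices of Q, or r is nonadjacent to exactly one vertex of Q. -/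
open SimpleGraph

set_option maxHeartbeats 1600000 in
theorem stmt_8 {V : Type*} [Fintype V] (G : SimpleGraph V)
    (hclaw : _root_.Free claw G) (hkk : _root_.Free kkJoin G) (u : V)
    (Q : Finset V) (hQclique : G.IsClique ↑Q) (hQsub : ↑Q ⊆ G.neighborSet u)
    (hQmax : ∀ Q' : Finset V, G.IsClique ↑Q' → ↑Q' ⊆ G.neighborSet u → Q'.card ≤ Q.card)
    (r : V) (hR : G.neighborSet u \ ↑Q = {r}) :
    (∀ q ∈ Q, ¬ G.Adj r q) ∨ (∃! q, q ∈ Q ∧ ¬ G.Adj r q) := by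
  classical
  have hrmem : r ∈ G.neighborSet u \ ↑Q := by rw [hR]; rfl
  have hur : G.Adj u r := hrmem.1
  have hrQ : r ∉ Q := fun h => hrmem.2 (by exact_mod_cast h)
  by_cases hall : ∀ q ∈ Q, ¬ G.Adj r q
  · left; exact hall
  · right
    push_neg at hall
    obtain ⟨q0, hq0Q, hq0adj⟩ := hall
    have hex : ∃ q ∈ Q, ¬ G.Adj r q := by
      by_contra h
      push_neg at h
      have hclique : G.IsClique ↑(insert r Q) := by
        rw [Finset.coe_insert]
        apply hQclique.insert
        intro q hq _
        exact h q (by exact_mod_cast hq)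
      have hsub : ↑(insert r Q) ⊆ G.neighborSet u := by
        rw [Finset.coe_insert]
        rintro x hx
        rcases hx with rfl | hx
        · exact hur
        · exact hQsub hx
      have := hQmax _ hclique hsub
      rw [Finset.card_insert_of_notMem hrQ] at this
      omega
    obtain ⟨q1, hq1Q, hq1⟩ := hex
    refine ⟨q1, ⟨hq1Q, hq1⟩, ?_⟩
    rintro q2 ⟨hq2Q, hq2⟩
    by_contra hne
    have huq0 : G.Adj u q0 := hQsub (Finset.mem_coe.mpr hq0Q)
    have huq1 : G.Adj u q1 := hQsub (Finset.mem_coe.mpr hq1Q)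
    have huq2 : G.Adj u q2 := hQsub (Finset.mem_coe.mpr hq2Q)
    have h12 : G.Adj q1 q2 := hQclique (Finset.mem_coe.mpr hq1Q) (Finset.mem_coe.mpr hq2Q)
      (fun h => hne h.symm)
    have h01 : G.Adj q0 q1 := hQclique (Finset.mem_coe.mpr hq0Q) (Finset.mem_coe.mpr hq1Q)
      (fun h => hq1 (h ▸ hq0adj))
    have h02 : G.Adj q0 q2 := hQclique (Finset.mem_coe.mpr hq0Q) (Finset.mem_coe.mpr hq2Q)
      (fun h => hq2 (h ▸ hq0adj))
    have hrq0 : G.Adj r q0 := hq0adj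
    have n12 : q1 ≠ q2 := h12.ne
    have n01 : q0 ≠ q1 := h01.ne
    have n02 : q0 ≠ q2 := h02.ne
    have nur : u ≠ r := hur.ne
    have nu0 : u ≠ q0 := huq0.ne
    have nu1 : u ≠ q1 := huq1.ne
    have nu2 : u ≠ q2 := huq2.ne
    have nr0 : r ≠ q0 := hrq0.ne
    have nr1 : r ≠ q1 := fun h => hrQ (h ▸ hq1Q)
    have nr2 : r ≠ q2 := fun h => hrQ (h ▸ hq2Q)
    have hq1' : ¬ G.Adj q1 r := fun h => hq1 h.symm
    have hq2' : ¬ G.Adj q2 r := fun h => hq2 h.symm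
    have hemb : kkJoin ↪g G := by
      refine ⟨⟨![q1, q2, r, u, q0], ?_⟩, ?_⟩
      · intro a b hab
        fin_cases a <;> fin_cases b <;> simp only [Matrix.cons_val_zero,
          Matrix.cons_val_one, Matrix.head_cons, Matrix.cons_val_two, Matrix.tail_cons,
          Matrix.cons_val_three, Matrix.cons_val_four, Matrix.cons_val_succ] at hab <;>
        first
        | rfl
        | exact absurd hab n12 | exact absurd hab n12.symm
        | exact absurd hab n01 | exact absurd hab n01.symm
        | exact absurd hab n02 | exact absurd hab n02.symm
        | exact absurd hab nur | exact absurd hab nur.symm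
        | exact absurd hab nu0 | exact absurd hab nu0.symm
        | exact absurd hab nu1 | exact absurd hab nu1.symm
        | exact absurd hab nu2 | exact absurd hab nu2.symm
        | exact absurd hab nr0 | exact absurd hab nr0.symm
        | exact absurd hab nr1 | exact absurd hab nr1.symm
        | exact absurd hab nr2 | exact absurd hab nr2.symm
      · intro a b
        fin_cases a <;> fin_cases b <;>
          simp [kkJoin, Sym2.eq_iff] <;>
          first
          | assumption
          | exact h12.symm
          | exact h01.symm
          | exact h02.symm
          | exact hur.symm
          | exact huq0.symm
          | exact huq1.symm
          | exact huq2.symm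
          | exact hrq0.symm
    exact (hkk : IsEmpty _).false hemb
end

section
/- Let G be a finite simple graph that is K_{1,3}-free and ((K_2 ∪ K_1) + K_2)-free, u a vertex, Q a maximum clique in the induced subgraph on N(u), and R = N(u) \ Q. If some vertex x ∈ R has at least two non-neighbors in Q, then x is nonadjacent to every vertex of Q. -/
open SimpleGraph

set_option maxHeartbeats 1000000 in
theorem stmt_9 {V : Type*} [Fintype V] (G : SimpleGraph V)
    (hclaw : _root_.Free claw G) (hkk : _root_.Free kkJoin G) (u : V)
    (Q : Finset V) (hQclique : G.IsClique ↑Q) (hQsub : ↑Q ⊆ G.neighborSet u)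
    (hQmax : ∀ Q' : Finset V, G.IsClique ↑Q' → ↑Q' ⊆ G.neighborSet u → Q'.card ≤ Q.card)
    (x : V) (hx : x ∈ G.neighborSet u \ ↑Q)
    (y z : V) (hy : y ∈ Q) (hz : z ∈ Q) (hyz : y ≠ z)
    (hxy : ¬ G.Adj x y) (hxz : ¬ G.Adj x z) :
    ∀ q ∈ Q, ¬ G.Adj x q := by
  intro q hq hadj
  rcases hx with ⟨hxu, hxQ⟩
  simp only [SimpleGraph.mem_neighborSet] at hxu
  have hxnQ : x ∉ Q := by simpa using hxQ
  have hqy : q ≠ y := by rintro rfl; exact hxy hadj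
  have hqz : q ≠ z := by rintro rfl; exact hxz hadj
  have hyx : y ≠ x := fun h => hxnQ (h ▸ hy)
  have hzx : z ≠ x := fun h => hxnQ (h ▸ hz)
  have hqx : q ≠ x := fun h => hxnQ (h ▸ hq)
  have huy : G.Adj u y := hQsub hy
  have huz : G.Adj u z := hQsub hz
  have huq : G.Adj u q := hQsub hq
  have hyzadj : G.Adj y z := hQclique hy hz hyz
  have hqyadj : G.Adj q y := hQclique hq hy hqy
  have hqzadj : G.Adj q z := hQclique hq hz hqz
  have hux : G.Adj u x := hxu
  have h1 := huy.symm
  have h2 := huz.symm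
  have h3 := huq.symm
  have h4 := hyzadj.symm
  have h5 := hqyadj.symm
  have h6 := hqzadj.symm
  have h7 := hadj.symm
  have h8 := hux.symm
  have hxy' : ¬ G.Adj y x := fun h => hxy h.symm
  have hxz' : ¬ G.Adj z x := fun h => hxz h.symm
  have hinj : Function.Injective ![y, z, x, u, q] := by
    intro a b hab
    fin_cases a <;> fin_cases b <;>
      first
        | rfl
        | exact absurd hab (hyz)
        | exact absurd hab.symm (hyz)
        | exact absurd hab (hyx)
        | exact absurd hab.symm (hyx)
        | exact absurd hab (huy.ne')
        | exact absurd hab.symm (huy.ne')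
        | exact absurd hab (hqy.symm)
        | exact absurd hab.symm (hqy.symm)
        | exact absurd hab (hzx)
        | exact absurd hab.symm (hzx)
        | exact absurd hab (huz.ne')
        | exact absurd hab.symm (huz.ne')
        | exact absurd hab (hqz.symm)
        | exact absurd hab.symm (hqz.symm)
        | exact absurd hab (hux.ne')
        | exact absurd hab.symm (hux.ne')
        | exact absurd hab (hqx.symm)
        | exact absurd hab.symm (hqx.symm)
        | exact absurd hab (huq.ne)
        | exact absurd hab.symm (huq.ne)
  refine hkk.false ⟨⟨![y, z, x, u, q], hinj⟩, ?_⟩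
  intro a b
  fin_cases a <;> fin_cases b <;>
    simp [kkJoin, Set.mem_insert_iff, Sym2.eq, Sym2.rel_iff] <;>
    first | assumption | exact fun h => G.irrefl h
end

section
/- Let G be a finite simple graph that is K_{1,3}-free and ((K_2 ∪ K_1) + K_2)-free with ω(G) ≥ 4. Then for every vertex v lying in a clique of size ω(G), the induced subgraph on N(v) is neither a 5-cycle nor a path on 4 vertices. -/
open SimpleGraph

theorem stmt_10 {V : Type*} [Fintype V] (G : SimpleGraph V)
    (hclaw : _root_.Free claw G) (hkk : _root_.Free kkJoin G) (hω : 4 ≤ G.cliqueNum) :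
    ∀ v : V, (∃ s : Finset V, G.IsNClique G.cliqueNum s ∧ v ∈ s) →
      ¬ Nonempty (G.induce (G.neighborSet v) ≃g cycleGraph 5) ∧
      ¬ Nonempty (G.induce (G.neighborSet v) ≃g pathGraph 4) := by

  classical
  have hC5 : ∀ a b c : Fin 5, (cycleGraph 5).Adj a b → (cycleGraph 5).Adj a c →
      (cycleGraph 5).Adj b c → False := by simp only [cycleGraph_adj']; decide
  have hP4 : ∀ a b c : Fin 4, (pathGraph 4).Adj a b → (pathGraph 4).Adj a c →
      (pathGraph 4).Adj b c → False := by simp only [pathGraph_adj]; decide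
  rintro v ⟨s, hs, hv⟩
  -- get a triangle in N(v)
  have hcard : 3 ≤ (s.erase v).card := by
    have := hs.card_eq
    have : 4 ≤ s.card := this ▸ hω
    have := Finset.card_erase_of_mem hv
    omega
  obtain ⟨t, hts, htc⟩ := Finset.exists_subset_card_eq hcard
  obtain ⟨a, b, c, hab, hac, hbc, rfl⟩ := Finset.card_eq_three.mp htc
  have ha : a ∈ s.erase v := hts (by simp)
  have hb : b ∈ s.erase v := hts (by simp)
  have hc : c ∈ s.erase v := hts (by simp)
  have hclq := hs.isClique
  have haN : a ∈ G.neighborSet v := hclq (Finset.mem_of_mem_erase ha) hv (Finset.ne_of_mem_erase ha) |>.symm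
  have hbN : b ∈ G.neighborSet v := hclq (Finset.mem_of_mem_erase hb) hv (Finset.ne_of_mem_erase hb) |>.symm
  have hcN : c ∈ G.neighborSet v := hclq (Finset.mem_of_mem_erase hc) hv (Finset.ne_of_mem_erase hc) |>.symm
  have hAab : (G.induce (G.neighborSet v)).Adj ⟨a, haN⟩ ⟨b, hbN⟩ :=
    hclq (Finset.mem_of_mem_erase ha) (Finset.mem_of_mem_erase hb) hab
  have hAac : (G.induce (G.neighborSet v)).Adj ⟨a, haN⟩ ⟨c, hcN⟩ :=
    hclq (Finset.mem_of_mem_erase ha) (Finset.mem_of_mem_erase hc) hac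
  have hAbc : (G.induce (G.neighborSet v)).Adj ⟨b, hbN⟩ ⟨c, hcN⟩ :=
    hclq (Finset.mem_of_mem_erase hb) (Finset.mem_of_mem_erase hc) hbc
  constructor
  · rintro ⟨e⟩
    exact hC5 _ _ _ (e.map_adj_iff.mpr hAab) (e.map_adj_iff.mpr hAac) (e.map_adj_iff.mpr hAbc)
  · rintro ⟨e⟩
    exact hP4 _ _ _ (e.map_adj_iff.mpr hAab) (e.map_adj_iff.mpr hAac) (e.map_adj_iff.mpr hAbc)
end

section
/- Let G be a finite simple K_{1,3}-free graph, u a vertex, Q a maximum clique in N(u), and R = N(u) \ Q. If |Q| = 2 and there exist nonadjacent x, y ∈ R and a third vertex v ∈ R \ {x, y} with |N(u)| > 4, and G is also ((K_2 ∪ K_1) + K_2)-free, then the induced subgraph on N(u) is a 5-cycle. -/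
open SimpleGraph

open Finset


set_option linter.unusedSectionVars false

section Core
variable {W : Type*} [Fintype W] [DecidableEq W] (H : SimpleGraph W) [DecidableRel H.Adj]
variable (htri : ∀ a b c : W, H.Adj a b → H.Adj a c → H.Adj b c → False)
variable (hind : ∀ a b c : W, a ≠ b → a ≠ c → b ≠ c → H.Adj a b ∨ H.Adj a c ∨ H.Adj b c)

include htri hind in
private lemma no3nbr : ∀ a b c d : W, b ≠ c → b ≠ d → c ≠ d →
    H.Adj a b → H.Adj a c → H.Adj a d → False := by
  intro a b c d hbc hbd hcd hab hac had
  rcases hind b c d hbc hbd hcd with h | h | h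
  · exact htri a b c hab hac h
  · exact htri a b d hab had h
  · exact htri a c d hac had h

include htri hind in
private lemma no3non : ∀ a b c d : W, b ≠ c → b ≠ d → c ≠ d → a ≠ b → a ≠ c → a ≠ d →
    ¬H.Adj a b → ¬H.Adj a c → ¬H.Adj a d → False := by
  intro a b c d hbc hbd hcd hab hac had nab nac nad
  have h1 : H.Adj b c := by rcases hind a b c hab hac hbc with h|h|h <;> tauto
  have h2 : H.Adj b d := by rcases hind a b d hab had hbd with h|h|h <;> tauto
  have h3 : H.Adj c d := by rcases hind a c d hac had hcd with h|h|h <;> tauto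
  exact htri b c d h1 h2 h3

private lemma three_of_card {s : Finset W} (h : 3 ≤ s.card) :
    ∃ a ∈ s, ∃ b ∈ s, ∃ c ∈ s, a ≠ b ∧ a ≠ c ∧ b ≠ c := by
  obtain ⟨t, hts, ht⟩ := Finset.exists_subset_card_eq (n := 3) h
  obtain ⟨a, b, c, hab, hac, hbc, rfl⟩ := Finset.card_eq_three.mp ht
  exact ⟨a, hts (by simp), b, hts (by simp), c, hts (by simp), hab, hac, hbc⟩

include htri hind in
private lemma nbr_le (a : W) : ((univ.erase a).filter (fun z => H.Adj a z)).card ≤ 2 := by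
  by_contra hlt
  obtain ⟨b, hb, c, hc, d, hd, hbc, hbd, hcd⟩ := three_of_card
    (s := (univ.erase a).filter (fun z => H.Adj a z)) (by omega)
  simp only [mem_filter] at hb hc hd
  exact no3nbr H htri hind a b c d hbc hbd hcd hb.2 hc.2 hd.2

include htri hind in
private lemma nonnbr_le (a : W) : ((univ.erase a).filter (fun z => ¬H.Adj a z)).card ≤ 2 := by
  by_contra hlt
  obtain ⟨b, hb, c, hc, d, hd, hbc, hbd, hcd⟩ := three_of_card
    (s := (univ.erase a).filter (fun z => ¬H.Adj a z)) (by omega)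
  simp only [mem_filter, mem_erase] at hb hc hd
  exact no3non H htri hind a b c d hbc hbd hcd
    (Ne.symm hb.1.1) (Ne.symm hc.1.1) (Ne.symm hd.1.1) hb.2 hc.2 hd.2

include htri hind in
private lemma core_card_le : Fintype.card W ≤ 5 := by
  rcases isEmpty_or_nonempty W with h | hne
  · simp [Fintype.card_eq_zero]
  · obtain ⟨a⟩ := hne
    have h := Finset.card_filter_add_card_filter_not
      (s := (univ.erase a : Finset W)) (p := fun z => H.Adj a z)
    have h1 := nbr_le H htri hind a
    have h2 := nonnbr_le H htri hind a
    have h3 : (univ.erase a : Finset W).card = Fintype.card W - 1 := by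
      rw [Finset.card_erase_of_mem (mem_univ a)]; rfl
    have hpos : 0 < Fintype.card W := Fintype.card_pos_iff.mpr ⟨a⟩
    omega

private lemma buildIso (hcard : Fintype.card W = 5)
    (w0 w1 w2 w3 w4 : W)
    (d01 : w0 ≠ w1) (d02 : w0 ≠ w2) (d03 : w0 ≠ w3) (d04 : w0 ≠ w4)
    (d12 : w1 ≠ w2) (d13 : w1 ≠ w3) (d14 : w1 ≠ w4)
    (d23 : w2 ≠ w3) (d24 : w2 ≠ w4) (d34 : w3 ≠ w4)
    (e01 : H.Adj w0 w1) (e12 : H.Adj w1 w2) (e23 : H.Adj w2 w3)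
    (e34 : H.Adj w3 w4) (e40 : H.Adj w4 w0)
    (n02 : ¬ H.Adj w0 w2) (n03 : ¬ H.Adj w0 w3) (n13 : ¬ H.Adj w1 w3)
    (n14 : ¬ H.Adj w1 w4) (n24 : ¬ H.Adj w2 w4) :
    Nonempty (H ≃g cycleGraph 5) := by
  have e10 := e01.symm
  have e21 := e12.symm
  have e32 := e23.symm
  have e43 := e34.symm
  have e04 := e40.symm
  have n20 : ¬ H.Adj w2 w0 := fun h => n02 h.symm
  have n30 : ¬ H.Adj w3 w0 := fun h => n03 h.symm
  have n31 : ¬ H.Adj w3 w1 := fun h => n13 h.symm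
  have n41 : ¬ H.Adj w4 w1 := fun h => n14 h.symm
  have n42 : ¬ H.Adj w4 w2 := fun h => n24 h.symm
  have hinj : Function.Injective (![w0, w1, w2, w3, w4]) := by
    intro i j h
    fin_cases i <;> fin_cases j <;>
      simp only [Matrix.cons_val_zero, Matrix.cons_val_one, Matrix.head_cons,
        Matrix.cons_val_two, Matrix.tail_cons, Matrix.cons_val_three, Matrix.cons_val_four,
        Matrix.head_fin_const, Fin.mk_zero, Fin.mk_one] at h <;>
      first | rfl | exact absurd h ‹_› | exact absurd h.symm ‹_›
  have hbij : Function.Bijective (![w0, w1, w2, w3, w4]) :=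
    (Fintype.bijective_iff_injective_and_card _).mpr ⟨hinj, by simp [hcard]⟩
  refine ⟨(⟨Equiv.ofBijective _ hbij, @fun i j => ?_⟩ : cycleGraph 5 ≃g H).symm⟩
  show H.Adj (![w0, w1, w2, w3, w4] i) (![w0, w1, w2, w3, w4] j) ↔ (cycleGraph 5).Adj i j
  fin_cases i <;> fin_cases j <;>
    simp only [Matrix.cons_val_zero, Matrix.cons_val_one, Matrix.head_cons,
      Matrix.cons_val_two, Matrix.tail_cons, Matrix.cons_val_three, Matrix.cons_val_four,
      Matrix.head_fin_const, Fin.mk_zero, Fin.mk_one] <;>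
    first
      | exact iff_of_true (by assumption) (by decide)
      | exact iff_of_false (by first | exact H.irrefl | assumption) (by decide)

include htri hind in
private lemma core_iso (hcard : Fintype.card W = 5) : Nonempty (H ≃g cycleGraph 5) := by
  have hne : Nonempty W := Fintype.card_pos_iff.mp (by omega)
  obtain ⟨v0⟩ := hne
  have hsplit := Finset.card_filter_add_card_filter_not
    (s := (univ.erase v0 : Finset W)) (p := fun z => H.Adj v0 z)
  have h1 := nbr_le H htri hind v0
  have h2 := nonnbr_le H htri hind v0
  have h3 : (univ.erase v0 : Finset W).card = 4 := by
    rw [Finset.card_erase_of_mem (mem_univ v0), Finset.card_univ, hcard]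
  have hnb : ((univ.erase v0).filter (fun z => H.Adj v0 z)).card = 2 := by omega
  have hnn : ((univ.erase v0).filter (fun z => ¬H.Adj v0 z)).card = 2 := by omega
  obtain ⟨v1, v2, hne12, hnb2⟩ := Finset.card_eq_two.mp hnb
  obtain ⟨v3, v4, hne34, hnn2⟩ := Finset.card_eq_two.mp hnn
  have hv1 : v1 ∈ (univ.erase v0).filter (fun z => H.Adj v0 z) := by rw [hnb2]; simp
  have hv2 : v2 ∈ (univ.erase v0).filter (fun z => H.Adj v0 z) := by rw [hnb2]; simp
  have hv3 : v3 ∈ (univ.erase v0).filter (fun z => ¬H.Adj v0 z) := by rw [hnn2]; simp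
  have hv4 : v4 ∈ (univ.erase v0).filter (fun z => ¬H.Adj v0 z) := by rw [hnn2]; simp
  simp only [mem_filter, mem_erase] at hv1 hv2 hv3 hv4
  have a01 : H.Adj v0 v1 := hv1.2
  have a02 : H.Adj v0 v2 := hv2.2
  have n03 : ¬H.Adj v0 v3 := hv3.2
  have n04 : ¬H.Adj v0 v4 := hv4.2
  have d01 : v0 ≠ v1 := a01.ne
  have d02 : v0 ≠ v2 := a02.ne
  have d03 : v0 ≠ v3 := Ne.symm hv3.1.1
  have d04 : v0 ≠ v4 := Ne.symm hv4.1.1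
  have d13 : v1 ≠ v3 := fun h => n03 (h ▸ a01)
  have d14 : v1 ≠ v4 := fun h => n04 (h ▸ a01)
  have d23 : v2 ≠ v3 := fun h => n03 (h ▸ a02)
  have d24 : v2 ≠ v4 := fun h => n04 (h ▸ a02)
  have n12 : ¬H.Adj v1 v2 := fun h => htri v0 v1 v2 a01 a02 h
  have a34 : H.Adj v3 v4 := by
    rcases hind v0 v3 v4 d03 d04 hne34 with h | h | h <;> tauto
  have notboth1 : ¬(H.Adj v1 v3 ∧ H.Adj v1 v4) := fun ⟨h3, h4⟩ => htri v1 v3 v4 h3 h4 a34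
  have atleast1 : H.Adj v1 v3 ∨ H.Adj v1 v4 := by
    by_contra hno
    push_neg at hno
    exact no3non H htri hind v1 v2 v3 v4 d23 d24 hne34 hne12 d13 d14 n12 hno.1 hno.2
  have notboth2 : ¬(H.Adj v2 v3 ∧ H.Adj v2 v4) := fun ⟨h3, h4⟩ => htri v2 v3 v4 h3 h4 a34
  have atleast2 : H.Adj v2 v3 ∨ H.Adj v2 v4 := by
    by_contra hno
    push_neg at hno
    exact no3non H htri hind v2 v1 v3 v4 d13 d14 hne34 (Ne.symm hne12) d23 d24
      (fun h => n12 h.symm) hno.1 hno.2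
  rcases atleast1 with h13 | h14
  · have n14 : ¬H.Adj v1 v4 := fun h => notboth1 ⟨h13, h⟩
    have n23 : ¬H.Adj v2 v3 := fun h =>
      no3nbr H htri hind v3 v1 v2 v4 hne12 d14 d24 h13.symm h.symm a34
    have a24 : H.Adj v2 v4 := atleast2.resolve_left n23
    exact buildIso H hcard v0 v1 v3 v4 v2 d01 d03 d04 d02 d13 d14 hne12 hne34
      (Ne.symm d23) (Ne.symm d24) a01 h13 a34 a24.symm a02.symm n03 n04 n14 n12
      (fun h => n23 h.symm)
  · have n13 : ¬H.Adj v1 v3 := fun h => notboth1 ⟨h, h14⟩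
    have n24 : ¬H.Adj v2 v4 := fun h =>
      no3nbr H htri hind v4 v1 v2 v3 hne12 d13 d23 h14.symm h.symm a34.symm
    have a23 : H.Adj v2 v3 := atleast2.resolve_right n24
    exact buildIso H hcard v0 v1 v4 v3 v2 d01 d04 d03 d02 d14 d13 hne12
      (Ne.symm hne34) (Ne.symm d24) (Ne.symm d23) a01 h14 a34.symm a23.symm a02.symm
      n04 n03 n13 n12 (fun h => n24 h.symm)

end Core

theorem stmt_15 {V : Type*} [Fintype V] (G : SimpleGraph V)
    (hclaw : _root_.Free claw G) (hkk : _root_.Free kkJoin G) (u : V)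
    (Q : Finset V) (hQclique : G.IsClique ↑Q) (hQsub : ↑Q ⊆ G.neighborSet u)
    (hQmax : ∀ Q' : Finset V, G.IsClique ↑Q' → ↑Q' ⊆ G.neighborSet u → Q'.card ≤ Q.card)
    (R : Set V) (hR : R = G.neighborSet u \ ↑Q)
    (hQ2 : Q.card = 2)
    (x y : V) (hx : x ∈ R) (hy : y ∈ R) (hxyne : x ≠ y) (hxy : ¬ G.Adj x y)
    (v : V) (hv : v ∈ R \ {x, y})
    (hbig : 4 < (G.neighborSet u).ncard) :
    Nonempty (G.induce (G.neighborSet u) ≃g cycleGraph 5) := by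
  classical
  set S := G.neighborSet u with hS
  haveI : Fintype ↥S := Set.Finite.fintype (Set.toFinite S)
  have htri : ∀ a b c : ↥S, (G.induce S).Adj a b → (G.induce S).Adj a c →
      (G.induce S).Adj b c → False := by
    intro a b c hab' hac' hbc'
    have hab : G.Adj ↑a ↑b := hab'
    have hac : G.Adj ↑a ↑c := hac'
    have hbc : G.Adj ↑b ↑c := hbc'
    have hba := hab.symm; have hca := hac.symm; have hcb := hbc.symm
    have hclique : G.IsClique ↑({a.1, b.1, c.1} : Finset V) := by
      rw [Finset.coe_insert, Finset.coe_insert, Finset.coe_singleton]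
      intro x hx y hy hxy
      simp only [Set.mem_insert_iff, Set.mem_singleton_iff] at hx hy
      rcases hx with rfl | rfl | rfl <;> rcases hy with rfl | rfl | rfl <;>
        first | exact absurd rfl hxy | assumption
    have hsub : ↑({a.1, b.1, c.1} : Finset V) ⊆ G.neighborSet u := by
      intro z hz
      simp only [Finset.coe_insert, Finset.coe_singleton, Set.mem_insert_iff,
        Set.mem_singleton_iff] at hz
      rcases hz with rfl | rfl | rfl
      exacts [a.2, b.2, c.2]
    have hcard3 : ({a.1, b.1, c.1} : Finset V).card = 3 := by
      rw [Finset.card_insert_of_notMem (by simp [hab.ne, hac.ne]),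
        Finset.card_insert_of_notMem (by simp [hbc.ne]), Finset.card_singleton]
    have := hQmax {a.1, b.1, c.1} hclique hsub
    omega
  have hind : ∀ a b c : ↥S, a ≠ b → a ≠ c → b ≠ c →
      (G.induce S).Adj a b ∨ (G.induce S).Adj a c ∨ (G.induce S).Adj b c := by
    intro a b c hab hac hbc
    by_contra hno
    push_neg at hno
    obtain ⟨nab', nac', nbc'⟩ := hno
    have nab : ¬ G.Adj ↑a ↑b := nab'
    have nac : ¬ G.Adj ↑a ↑c := nac'
    have nbc : ¬ G.Adj ↑b ↑c := nbc'
    have hadj : ∀ i : Fin 3, G.Adj u (![a.1, b.1, c.1] i) := by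
      intro i
      fin_cases i
      exacts [a.2, b.2, c.2]
    have vinj : Function.Injective ![a.1, b.1, c.1] := by
      have h1 : a.1 ≠ b.1 := fun h => hab (Subtype.ext h)
      have h2 : a.1 ≠ c.1 := fun h => hac (Subtype.ext h)
      have h3 : b.1 ≠ c.1 := fun h => hbc (Subtype.ext h)
      intro i j h
      fin_cases i <;> fin_cases j <;>
        simp only [Matrix.cons_val_zero, Matrix.cons_val_one, Matrix.head_cons,
          Matrix.cons_val_two, Matrix.tail_cons, Fin.mk_zero, Fin.mk_one] at h <;>
        first | rfl | exact absurd h ‹_› | exact absurd h.symm ‹_›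
    have vnon : ∀ i j : Fin 3, ¬ G.Adj (![a.1, b.1, c.1] i) (![a.1, b.1, c.1] j) := by
      have nba : ¬ G.Adj ↑b ↑a := fun h => nab h.symm
      have nca : ¬ G.Adj ↑c ↑a := fun h => nac h.symm
      have ncb : ¬ G.Adj ↑c ↑b := fun h => nbc h.symm
      intro i j
      fin_cases i <;> fin_cases j <;>
        simp only [Matrix.cons_val_zero, Matrix.cons_val_one, Matrix.head_cons,
          Matrix.cons_val_two, Matrix.tail_cons, Fin.mk_zero, Fin.mk_one] <;>
        first | exact G.irrefl | assumption
    have emb : claw ↪g G := by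
      refine ⟨⟨Sum.elim (fun _ => u) ![a.1, b.1, c.1], ?_⟩, ?_⟩
      · rintro (s | s) (t | t) h
        · exact congrArg Sum.inl (Subsingleton.elim s t)
        · exact absurd h (G.ne_of_adj (hadj t))
        · exact absurd h.symm (G.ne_of_adj (hadj s))
        · exact congrArg Sum.inr (vinj h)
      · rintro (s | s) (t | t)
        · exact iff_of_false (G.irrefl) (by simp [claw])
        · exact iff_of_true (hadj t) (by simp [claw])
        · exact iff_of_true (hadj s).symm (by simp [claw])
        · exact iff_of_false (vnon s t) (by simp [claw])
    exact hclaw.false emb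
  have hcards : Fintype.card ↥S = S.ncard := by
    rw [Set.ncard_eq_toFinset_card']
    simp [Set.toFinset_card]
  have hle := core_card_le (G.induce S) htri hind
  have hcard5 : Fintype.card ↥S = 5 := by omega
  exact core_iso (G.induce S) htri hind hcard5
end

section
/- Let G be a finite simple graph that is K_{1,3}-free and ((K_2 ∪ K_1) + K_2)-free, u a vertex, Q a maximum clique in the induced subgraph on N(u), and R = N(u) \ Q. If the induced subgraph on N(u) is neither C_5 nor P_4, then R induces a complete graph. -/
open SimpleGraph

lemma claw_embed {V : Type*} {G : SimpleGraph V} (hclaw : _root_.Free claw G) {u x y z : V}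
    (hux : G.Adj u x) (huy : G.Adj u y) (huz : G.Adj u z)
    (hxy : ¬G.Adj x y) (hxz : ¬G.Adj x z) (hyz : ¬G.Adj y z)
    (nxy : x ≠ y) (nxz : x ≠ z) (nyz : y ≠ z) : False := by
  apply hclaw.false
  refine ⟨⟨Sum.elim (fun _ => u) ![x, y, z], ?_⟩, ?_⟩
  · rintro (a | a) (b | b) h
    · simp [Subsingleton.elim a b]
    · exfalso; revert h; fin_cases b <;>
        simpa using fun h => (by subst h; simp_all : False)
    · exfalso; revert h; fin_cases a <;>
        simpa using fun h => (by subst h; simp_all : False)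
    · simp only [Sum.elim_inr] at h
      fin_cases a <;> fin_cases b <;> simp_all
  · generalize_proofs
    rintro (a | a) (b | b)
    · simp [claw, Subsingleton.elim a b]
    · fin_cases a <;> fin_cases b <;> simp [claw, hux, huy, huz]
    · fin_cases a <;> fin_cases b <;>
        simp [claw, hux.symm, huy.symm, huz.symm]
    · fin_cases a <;> fin_cases b <;> simp_all [claw] <;>
        first
          | exact fun h => hxy h.symm
          | exact fun h => hxz h.symm
          | exact fun h => hyz h.symm

lemma kk_embed {V : Type*} {G : SimpleGraph V} (hkk : _root_.Free kkJoin G) {v0 v1 v2 v3 v4 : V}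
    (h01 : G.Adj v0 v1) (h34 : G.Adj v3 v4) (h03 : G.Adj v0 v3) (h04 : G.Adj v0 v4)
    (h13 : G.Adj v1 v3) (h14 : G.Adj v1 v4) (h23 : G.Adj v2 v3) (h24 : G.Adj v2 v4)
    (n02 : ¬G.Adj v0 v2) (n12 : ¬G.Adj v1 v2) (d02 : v0 ≠ v2) (d12 : v1 ≠ v2) : False := by
  apply hkk.false
  refine ⟨⟨![v0, v1, v2, v3, v4], ?_⟩, ?_⟩
  · intro a b h
    fin_cases a <;> fin_cases b <;> simp_all <;>
      first
        | rfl
        | exact absurd h h01.ne | exact absurd h h01.ne'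
        | exact absurd h h34.ne | exact absurd h h34.ne'
        | exact absurd h h03.ne | exact absurd h h03.ne'
        | exact absurd h h04.ne | exact absurd h h04.ne'
        | exact absurd h h13.ne | exact absurd h h13.ne'
        | exact absurd h h14.ne | exact absurd h h14.ne'
        | exact absurd h h23.ne | exact absurd h h23.ne'
        | exact absurd h h24.ne | exact absurd h h24.ne'
        | exact absurd h d02 | exact absurd h d02.symm
        | exact absurd h d12 | exact absurd h d12.symm
  · generalize_proofs
    intro a b
    fin_cases a <;> fin_cases b <;>
      simp [kkJoin, h01, h34, h03, h04, h13, h14, h23, h24,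
        h01.symm, h34.symm, h03.symm, h04.symm, h13.symm, h14.symm, h23.symm, h24.symm,
        n02, n12] <;>
      first
        | exact fun h => n02 h.symm
        | exact fun h => n12 h.symm

theorem stmt_16 {V : Type*} [Fintype V] (G : SimpleGraph V)
    (hclaw : _root_.Free claw G) (hkk : _root_.Free kkJoin G) (u : V)
    (Q : Finset V) (hQclique : G.IsClique ↑Q) (hQsub : ↑Q ⊆ G.neighborSet u)
    (hQmax : ∀ Q' : Finset V, G.IsClique ↑Q' → ↑Q' ⊆ G.neighborSet u → Q'.card ≤ Q.card)
    (R : Set V) (hR : R = G.neighborSet u \ ↑Q)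
    (hnc : ¬ Nonempty (G.induce (G.neighborSet u) ≃g cycleGraph 5))
    (hnp : ¬ Nonempty (G.induce (G.neighborSet u) ≃g pathGraph 4)) :
    G.IsClique R := by
  classical
  rw [SimpleGraph.isClique_iff]
  intro x hx y hy hne
  by_contra hxy
  subst hR
  obtain ⟨hxu, hxQ⟩ := hx
  obtain ⟨hyu, hyQ⟩ := hy
  rw [SimpleGraph.mem_neighborSet] at hxu hyu
  have hxQ' : x ∉ Q := fun h => hxQ (Finset.mem_coe.mpr h)
  have hyQ' : y ∉ Q := fun h => hyQ (Finset.mem_coe.mpr h)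
  have hQN : ∀ c ∈ Q, G.Adj u c := fun c hc => hQsub (Finset.mem_coe.mpr hc)
  have hQadj : ∀ c d, c ∈ Q → d ∈ Q → c ≠ d → G.Adj c d := fun c d hc hd h =>
    hQclique (Finset.mem_coe.mpr hc) (Finset.mem_coe.mpr hd) h
  have hor : ∀ c ∈ Q, G.Adj x c ∨ G.Adj y c := by
    intro c hc
    by_contra h
    push_neg at h
    exact claw_embed hclaw hxu hyu (hQN c hc) hxy h.1 h.2 hne
      (by rintro rfl; exact hxQ' hc) (by rintro rfl; exact hyQ' hc)
  have hnotall : ∀ v, v ∉ Q → G.Adj u v → ∃ c ∈ Q, ¬G.Adj v c := by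
    intro v hvQ hvu
    by_contra h
    push_neg at h
    have hclq : G.IsClique ↑(insert v Q) := by
      rw [Finset.coe_insert]
      exact hQclique.insert (fun c hc _ => h c hc)
    have hsub : ↑(insert v Q) ⊆ G.neighborSet u := by
      rw [Finset.coe_insert]
      rintro w (rfl | hw)
      · exact hvu
      · exact hQsub hw
    have := hQmax _ hclq hsub
    rw [Finset.card_insert_of_notMem hvQ] at this
    omega
  obtain ⟨a, haQ, hxa⟩ := hnotall x hxQ' hxu
  obtain ⟨b, hbQ, hyb⟩ := hnotall y hyQ' hyu
  have hya : G.Adj y a := (hor a haQ).resolve_left hxa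
  have hxb : G.Adj x b := (hor b hbQ).resolve_right hyb
  have hab_ne : a ≠ b := fun e => hyb (e ▸ hya)
  have hab : G.Adj a b := hQadj a b haQ hbQ hab_ne
  have hua : G.Adj u a := hQN a haQ
  have hub : G.Adj u b := hQN b hbQ
  have hexcl : ∀ c ∈ Q, G.Adj x c → G.Adj y c → False := by
    intro c hc h1 h2
    have hbc : b ≠ c := fun e => hyb (e ▸ h2)
    exact kk_embed hkk (v0 := b) (v1 := x) (v2 := y) (v3 := u) (v4 := c)
      hxb.symm (hQN c hc) hub.symm (hQadj b c hbQ hc hbc)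
      hxu.symm h1 hyu.symm h2
      (fun h => hyb h.symm) hxy (by rintro rfl; exact hyQ' hbQ) hne
  have hQab : ∀ c ∈ Q, c = a ∨ c = b := by
    intro c hc
    by_contra h
    push_neg at h
    obtain ⟨hca, hcb⟩ := h
    rcases hor c hc with h1 | h1
    · have h2 : ¬G.Adj y c := fun h2 => hexcl c hc h1 h2
      exact kk_embed hkk (v0 := c) (v1 := b) (v2 := y) (v3 := u) (v4 := a)
        (hQadj c b hc hbQ hcb) hua (hQN c hc).symm (hQadj c a hc haQ hca)
        hub.symm (hQadj b a hbQ haQ hab_ne.symm) hyu.symm hya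
        (fun h => h2 h.symm) (fun h => hyb h.symm)
        (by rintro rfl; exact hyQ' hc) (by rintro rfl; exact hyQ' hbQ)
    · have h2 : ¬G.Adj x c := fun h2 => hexcl c hc h2 h1
      exact kk_embed hkk (v0 := c) (v1 := a) (v2 := x) (v3 := u) (v4 := b)
        (hQadj c a hc haQ hca) hub (hQN c hc).symm (hQadj c b hc hbQ hcb)
        hua.symm hab hxu.symm hxb
        (fun h => h2 h.symm) (fun h => hxa h.symm)
        (by rintro rfl; exact hxQ' hc) (by rintro rfl; exact hxQ' haQ)
  have hQcard : Q.card = 2 := by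
    have hQeq : Q = {a, b} := by
      apply Finset.ext; intro c
      simp only [Finset.mem_insert, Finset.mem_singleton]
      exact ⟨hQab c, by rintro (rfl | rfl) <;> assumption⟩
    rw [hQeq, Finset.card_insert_of_notMem (by simp [hab_ne]), Finset.card_singleton]
  have htri : ∀ p q r : V, G.Adj u p → G.Adj u q → G.Adj u r →
      G.Adj p q → G.Adj q r → G.Adj p r → False := by
    intro p q r hp hq hr hpq hqr hpr
    have hclq : G.IsClique ↑({p, q, r} : Finset V) := by
      intro s hs t ht hst
      simp only [Finset.coe_insert, Set.mem_insert_iff, Finset.coe_singleton,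
        Set.mem_singleton_iff] at hs ht
      rcases hs with rfl | rfl | rfl <;> rcases ht with rfl | rfl | rfl <;>
        first
          | exact absurd rfl hst
          | assumption
          | exact hpq.symm
          | exact hqr.symm
          | exact hpr.symm
    have hsub : ↑({p, q, r} : Finset V) ⊆ G.neighborSet u := by
      intro s hs
      simp only [Finset.coe_insert, Set.mem_insert_iff, Finset.coe_singleton,
        Set.mem_singleton_iff] at hs
      rcases hs with rfl | rfl | rfl <;> assumption
    have hcard : ({p, q, r} : Finset V).card = 3 := by
      rw [Finset.card_insert_of_notMem (by simp [hpq.ne, hpr.ne]),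
        Finset.card_insert_of_notMem (by simp [hqr.ne]), Finset.card_singleton]
    have := hQmax _ hclq hsub
    rw [hcard, hQcard] at this
    omega
  have hbyn : ¬G.Adj b y := fun h => hyb h.symm
  have haxn : ¬G.Adj a x := fun h => hxa h.symm
  have hwprop : ∀ w, G.Adj u w → w ≠ a → w ≠ b → w ≠ x → w ≠ y →
      G.Adj w x ∧ G.Adj w y ∧ ¬G.Adj w a ∧ ¬G.Adj w b := by
    intro w hw hwa hwb hwx hwy
    have h1 : G.Adj w x ∨ G.Adj w y := by
      by_contra h
      push_neg at h
      exact claw_embed hclaw hw hxu hyu h.1 h.2 hxy hwx hwy hne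
    rcases h1 with h | h
    · have hwb' : ¬G.Adj w b := fun hb' => htri w x b hw hxu hub h hxb hb'
      have hwy' : G.Adj w y := by
        by_contra hwy'
        exact claw_embed hclaw hw hub hyu hwb' hwy' hbyn hwb hwy
          (by rintro rfl; exact hyQ' hbQ)
      have hwa' : ¬G.Adj w a := fun ha' => htri w y a hw hyu hua hwy' hya ha'
      exact ⟨h, hwy', hwa', hwb'⟩
    · have hwa' : ¬G.Adj w a := fun ha' => htri w y a hw hyu hua h hya ha'
      have hwx' : G.Adj w x := by
        by_contra hwx'
        exact claw_embed hclaw hw hua hxu hwa' hwx' haxn hwa hwx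
          (by rintro rfl; exact hxQ' haQ)
      have hwb' : ¬G.Adj w b := fun hb' => htri w x b hw hxu hub hwx' hxb hb'
      exact ⟨hwx', h, hwa', hwb'⟩
  have hax_ne : x ≠ a := by rintro rfl; exact hxQ' haQ
  have hay_ne : a ≠ y := by rintro rfl; exact hyQ' haQ
  have hby_ne : b ≠ y := by rintro rfl; exact hyQ' hbQ
  by_cases hex : ∃ w, G.Adj u w ∧ w ≠ a ∧ w ≠ b ∧ w ≠ x ∧ w ≠ y
  · obtain ⟨w, hwu, hwa, hwb, hwx, hwy⟩ := hex
    obtain ⟨hwx', hwy', hwa', hwb'⟩ := hwprop w hwu hwa hwb hwx hwy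
    have huniq : ∀ v, G.Adj u v → v = a ∨ v = b ∨ v = x ∨ v = y ∨ v = w := by
      intro v hv
      by_contra hcon
      push_neg at hcon
      obtain ⟨h'a, h'b, h'x, h'y, h'w⟩ := hcon
      obtain ⟨h1, _, _, h4⟩ := hwprop v hv h'a h'b h'x h'y
      have hww' : ¬G.Adj w v := fun h => htri w v x hwu hv hxu h h1 hwx'
      exact claw_embed hclaw hxb hwx'.symm h1.symm
        (fun h => hwb' h.symm) (fun h => h4 h.symm) hww'
        hwb.symm h'b.symm h'w.symm
    have hset : G.neighborSet u = {x, b, a, y, w} := by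
      ext v
      simp only [SimpleGraph.mem_neighborSet, Set.mem_insert_iff, Set.mem_singleton_iff]
      constructor
      · intro hv
        rcases huniq v hv with rfl | rfl | rfl | rfl | rfl <;> tauto
      · rintro (rfl | rfl | rfl | rfl | rfl) <;> assumption
    set f5 : Fin 5 → V := ![x, b, a, y, w] with hf5
    have hmem : ∀ i, f5 i ∈ G.neighborSet u := by
      intro i
      fin_cases i <;> simp [f5, SimpleGraph.mem_neighborSet] <;> assumption
    have inj : Function.Injective (fun i => (⟨f5 i, hmem i⟩ : ↥(G.neighborSet u))) := by
      intro i j hij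
      have h : f5 i = f5 j := congrArg Subtype.val hij
      fin_cases i <;> fin_cases j <;>
        simp only [f5, Matrix.cons_val_zero, Matrix.cons_val_one, Matrix.head_cons,
          Matrix.cons_val_two, Matrix.tail_cons, Matrix.cons_val_three,
          Matrix.cons_val_four, Matrix.head_fin_const, Matrix.cons_val_fin_one] at h <;>
          first
            | rfl
            | exact absurd h hxb.ne | exact absurd h hxb.ne'
            | exact absurd h hax_ne | exact absurd h hax_ne.symm
            | exact absurd h hne | exact absurd h hne.symm
            | exact absurd h hwx | exact absurd h hwx.symm
            | exact absurd h hab_ne | exact absurd h hab_ne.symm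
            | exact absurd h hby_ne | exact absurd h hby_ne.symm
            | exact absurd h hwb | exact absurd h hwb.symm
            | exact absurd h hay_ne | exact absurd h hay_ne.symm
            | exact absurd h hwa | exact absurd h hwa.symm
            | exact absurd h hwy | exact absurd h hwy.symm
    have surj : Function.Surjective (fun i => (⟨f5 i, hmem i⟩ : ↥(G.neighborSet u))) := by
      rintro ⟨v, hv⟩
      rw [hset] at hv
      simp only [Set.mem_insert_iff, Set.mem_singleton_iff] at hv
      rcases hv with rfl | rfl | rfl | rfl | rfl
      · exact ⟨0, rfl⟩
      · exact ⟨1, rfl⟩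
      · exact ⟨2, rfl⟩
      · exact ⟨3, rfl⟩
      · exact ⟨4, rfl⟩
    refine hnc ⟨SimpleGraph.Iso.symm ⟨Equiv.ofBijective _ ⟨inj, surj⟩, ?_⟩⟩
    intro i j
    show G.Adj (f5 i) (f5 j) ↔ (cycleGraph 5).Adj i j
    fin_cases i <;> fin_cases j <;>
      simp only [f5, Matrix.cons_val_zero, Matrix.cons_val_one, Matrix.head_cons,
        Matrix.cons_val_two, Matrix.tail_cons, Matrix.cons_val_three,
        Matrix.cons_val_four, Matrix.head_fin_const, Matrix.cons_val_fin_one] <;>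
      rw [SimpleGraph.cycleGraph_adj'] <;>
      first
        | exact iff_of_true hxb (by decide)
        | exact iff_of_true hxb.symm (by decide)
        | exact iff_of_true hab.symm (by decide)
        | exact iff_of_true hab (by decide)
        | exact iff_of_true hya.symm (by decide)
        | exact iff_of_true hya (by decide)
        | exact iff_of_true hwy'.symm (by decide)
        | exact iff_of_true hwy' (by decide)
        | exact iff_of_true hwx' (by decide)
        | exact iff_of_true hwx'.symm (by decide)
        | exact iff_of_false (G.irrefl) (by decide)
        | exact iff_of_false haxn (by decide)
        | exact iff_of_false hxa (by decide)
        | exact iff_of_false hxy (by decide)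
        | exact iff_of_false (fun h => hxy h.symm) (by decide)
        | exact iff_of_false hbyn (by decide)
        | exact iff_of_false hyb (by decide)
        | exact iff_of_false hwb' (by decide)
        | exact iff_of_false (fun h => hwb' h.symm) (by decide)
        | exact iff_of_false hwa' (by decide)
        | exact iff_of_false (fun h => hwa' h.symm) (by decide)
  · push_neg at hex
    have hset : G.neighborSet u = {x, b, a, y} := by
      ext v
      simp only [SimpleGraph.mem_neighborSet, Set.mem_insert_iff, Set.mem_singleton_iff]
      constructor
      · intro hv
        by_contra hcon
        push_neg at hcon
        exact hcon.2.2.2 (hex v hv (fun e => hcon.2.2.1 e) (fun e => hcon.2.1 e)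
          (fun e => hcon.1 e))
      · rintro (rfl | rfl | rfl | rfl) <;> assumption
    set f4 : Fin 4 → V := ![x, b, a, y] with hf4
    have hmem : ∀ i, f4 i ∈ G.neighborSet u := by
      intro i
      fin_cases i <;> simp [f4, SimpleGraph.mem_neighborSet] <;> assumption
    have inj : Function.Injective (fun i => (⟨f4 i, hmem i⟩ : ↥(G.neighborSet u))) := by
      intro i j hij
      have h : f4 i = f4 j := congrArg Subtype.val hij
      fin_cases i <;> fin_cases j <;>
        simp only [f4, Matrix.cons_val_zero, Matrix.cons_val_one, Matrix.head_cons,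
          Matrix.cons_val_two, Matrix.tail_cons, Matrix.cons_val_three,
          Matrix.head_fin_const, Matrix.cons_val_fin_one] at h <;>
          first
            | rfl
            | exact absurd h hxb.ne | exact absurd h hxb.ne'
            | exact absurd h hax_ne | exact absurd h hax_ne.symm
            | exact absurd h hne | exact absurd h hne.symm
            | exact absurd h hab_ne | exact absurd h hab_ne.symm
            | exact absurd h hby_ne | exact absurd h hby_ne.symm
            | exact absurd h hay_ne | exact absurd h hay_ne.symm
    have surj : Function.Surjective (fun i => (⟨f4 i, hmem i⟩ : ↥(G.neighborSet u))) := by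
      rintro ⟨v, hv⟩
      rw [hset] at hv
      simp only [Set.mem_insert_iff, Set.mem_singleton_iff] at hv
      rcases hv with rfl | rfl | rfl | rfl
      · exact ⟨0, rfl⟩
      · exact ⟨1, rfl⟩
      · exact ⟨2, rfl⟩
      · exact ⟨3, rfl⟩
    refine hnp ⟨SimpleGraph.Iso.symm ⟨Equiv.ofBijective _ ⟨inj, surj⟩, ?_⟩⟩
    intro i j
    show G.Adj (f4 i) (f4 j) ↔ (pathGraph 4).Adj i j
    fin_cases i <;> fin_cases j <;>
      simp only [f4, Matrix.cons_val_zero, Matrix.cons_val_one, Matrix.head_cons,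
        Matrix.cons_val_two, Matrix.tail_cons, Matrix.cons_val_three,
        Matrix.head_fin_const, Matrix.cons_val_fin_one] <;>
      rw [SimpleGraph.pathGraph_adj] <;>
      first
        | exact iff_of_true hxb (by decide)
        | exact iff_of_true hxb.symm (by decide)
        | exact iff_of_true hab.symm (by decide)
        | exact iff_of_true hab (by decide)
        | exact iff_of_true hya.symm (by decide)
        | exact iff_of_true hya (by decide)
        | exact iff_of_false (G.irrefl) (by decide)
        | exact iff_of_false haxn (by decide)
        | exact iff_of_false hxa (by decide)
        | exact iff_of_false hxy (by decide)
        | exact iff_of_false (fun h => hxy h.symm) (by decide)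
        | exact iff_of_false hbyn (by decide)
        | exact iff_of_false hyb (by decide)
end
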